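/- arXiv:2006.10821 — 4 statements merged into one kernel-verified Lean document; each statement's English description precedes it below -/
import Mathlib

section
/- Let 𝒜 be a van Hove sequence and f ∈ C_u(G). Then the following are equivalent: (i) f is mean almost periodic with respect to 𝒜; (ii) there exists some p ≥ 1 such that for each ε > 0 the set {t ∈ G : ‖f − τ_t f‖_{b,p,𝒜} < ε} is relatively dense; (iii) for all p ≥ 1 and each ε > 0 the set {t ∈ G : ‖f − τ_t f‖_{b,p,𝒜} < ε} is relatively dense. -/
open MeasureTheory Filter Topology
open scoped ENNReal Pointwise

noncomputable section

namespace MAP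

section Defs

variable {G : Type*} [MeasurableSpace G] [TopologicalSpace G] [AddCommGroup G]

/-- The `K`-boundary `∂^K A` of a set `A`. -/
def kBoundary (K A : Set G) : Set G :=
  (closure (A + K) \ A) ∪ ((Aᶜ - K) ∩ closure A)

/-- A van Hove sequence: nonempty relatively compact open sets whose `K`-boundaries
become negligible compared to their volume. -/
structure IsVanHove (θ : Measure G) (A : ℕ → Set G) : Prop where
  isOpen : ∀ n, IsOpen (A n)
  nonempty : ∀ n, (A n).Nonempty
  relCompact : ∀ n, IsCompact (closure (A n))
  boundary : ∀ K : Set G, IsCompact K →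
    Tendsto (fun n => θ (kBoundary K (A n)) / θ (A n)) atTop (𝓝 0)

/-- `(1/θ(A)) ∫_A |f|^p`, valued in `ℝ≥0∞`. -/
def lpAvg (θ : Measure G) (A : Set G) (p : ℝ) (f : G → ℂ) : ℝ≥0∞ :=
  (∫⁻ t in A, ENNReal.ofReal (‖f t‖ ^ p) ∂θ) / θ A

/-- The Besicovitch seminorm `‖f‖_{b,p,𝒜}`. -/
def besSN (θ : Measure G) (A : ℕ → Set G) (p : ℝ) (f : G → ℂ) : ℝ≥0∞ :=
  (limsup (fun n => lpAvg θ (A n) p f) atTop) ^ (1 / p)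

/-- The Weyl seminorm `‖f‖_{w,p,𝒜}`. -/
def weylSN (θ : Measure G) (A : ℕ → Set G) (p : ℝ) (f : G → ℂ) : ℝ≥0∞ :=
  (limsup (fun n => ⨆ x : G, lpAvg θ (x +ᵥ A n) p f) atTop) ^ (1 / p)

/-- Membership in `L^p_loc`. -/
def MemLpLoc (θ : Measure G) (p : ℝ) (f : G → ℂ) : Prop :=
  AEStronglyMeasurable f θ ∧
    ∀ K : Set G, IsCompact K → (∫⁻ t in K, ENNReal.ofReal (‖f t‖ ^ p) ∂θ) < ⊤

/-- A relatively dense subset of `G`. -/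
def RelDense (S : Set G) : Prop :=
  ∃ K : Set G, IsCompact K ∧ ∀ g : G, ∃ t ∈ S, g - t ∈ K

/-- Mean almost periodicity of a function with respect to a van Hove sequence. -/
def MeanAP (θ : Measure G) (A : ℕ → Set G) (f : G → ℂ) : Prop :=
  ∀ ε : ℝ, 0 < ε →
    RelDense {t : G | besSN θ A 1 (fun s => f s - f (s - t)) < ENNReal.ofReal ε}

/-- `C_c(G)`: continuous compactly supported functions. -/
def IsCc (φ : G → ℂ) : Prop := Continuous φ ∧ HasCompactSupport φ

/-- `(1/θ(A)) ∫_A f`, valued in `ℂ`. -/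
def cAvg (θ : Measure G) (A : Set G) (f : G → ℂ) : ℂ :=
  (∫ t in A, f t ∂θ) / ((θ A).toReal : ℂ)

/-- `(1/θ(A)) ∫_{s+A} f`, valued in `ℂ`. -/
def shiftAvg (θ : Measure G) (A : Set G) (s : G) (f : G → ℂ) : ℂ :=
  (∫ t in s +ᵥ A, f t ∂θ) / ((θ A).toReal : ℂ)

/-- `(1/θ(A)) ∫_{s+A} f` for a real-valued `f`. -/
def shiftAvgR (θ : Measure G) (A : Set G) (s : G) (f : G → ℝ) : ℝ :=
  (∫ t in s +ᵥ A, f t ∂θ) / (θ A).toReal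

/-- The mean `M_𝒜(f)` exists and equals `c`. -/
def MeanTendsto (θ : Measure G) (A : ℕ → Set G) (f : G → ℂ) (c : ℂ) : Prop :=
  Tendsto (fun n => cAvg θ (A n) f) atTop (𝓝 c)

/-- The Dirac comb of a point set. -/
def diracComb (Λ : Set G) : Measure G := Measure.sum fun x : Λ => Measure.dirac (x : G)

/-- Convolution `(μ * φ)(t) = ∫ φ(t - s) dμ(s)` of a positive measure with a function. -/
def convM (μ : Measure G) (φ : G → ℂ) : G → ℂ := fun t => ∫ s, φ (t - s) ∂μ

/-- Uniform discreteness of a point set. -/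
def UnifDiscrete (Λ : Set G) : Prop :=
  ∃ U : Set G, IsOpen U ∧ (0 : G) ∈ U ∧
    ∀ x ∈ Λ, ∀ y ∈ Λ, x ≠ y → (x +ᵥ U) ∩ (y +ᵥ U) = ∅

/-- Delone sets: uniformly discrete and relatively dense. -/
def IsDelone (Λ : Set G) : Prop := UnifDiscrete Λ ∧ RelDense Λ

end Defs

section CharDefs

variable (G : Type*) [TopologicalSpace G] [AddCommGroup G]

/-- The set of continuous characters of `G`, inside `C(G, ℂ)`. -/
def CharSet : Set C(G, ℂ) :=
  {χ | (∀ x, ‖χ x‖ = 1) ∧ ∀ x y, χ (x + y) = χ x * χ y}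

/-- The dual group `Ĝ` of continuous characters, with the compact-open topology. -/
abbrev Char : Type _ := ↥(CharSet G)

instance : MeasurableSpace (Char G) := borel _

instance : BorelSpace (Char G) := ⟨rfl⟩

end CharDefs

section CharUse

variable {G : Type*} [MeasurableSpace G] [TopologicalSpace G] [AddCommGroup G]

/-- Trigonometric polynomials: finite linear combinations of characters. -/
def IsTrigPoly (P : G → ℂ) : Prop :=
  ∃ (n : ℕ) (c : Fin n → ℂ) (χ : Fin n → Char G),
    P = fun x => ∑ i, c i * ((χ i : C(G, ℂ)) x)

/-- Besicovitch `p`-almost periodicity of a function. -/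
def BapMem (θ : Measure G) (A : ℕ → Set G) (p : ℝ) (f : G → ℂ) : Prop :=
  MemLpLoc θ p f ∧ ∀ ε : ℝ, 0 < ε →
    ∃ P : G → ℂ, IsTrigPoly P ∧ besSN θ A p (fun x => f x - P x) < ENNReal.ofReal ε

/-- Weyl `p`-almost periodicity of a function. -/
def WapMem (θ : Measure G) (A : ℕ → Set G) (p : ℝ) (f : G → ℂ) : Prop :=
  MemLpLoc θ p f ∧ ∀ ε : ℝ, 0 < ε →
    ∃ P : G → ℂ, IsTrigPoly P ∧ weylSN θ A p (fun x => f x - P x) < ENNReal.ofReal ε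

/-- The Fourier–Bohr coefficient of `f` at `χ` along `A` exists and equals `a`. -/
def FBTendsto (θ : Measure G) (A : ℕ → Set G) (f : G → ℂ) (χ : Char G) (a : ℂ) : Prop :=
  MeanTendsto θ A (fun t => (starRingEnd ℂ) ((χ : C(G, ℂ)) t) * f t) a

/-- `φ̌(χ) = ∫ χ(t) φ(t) dt`. -/
def checkFn (θ : Measure G) (φ : G → ℂ) (χ : Char G) : ℂ :=
  ∫ t, (χ : C(G, ℂ)) t * φ t ∂θ

/-- `(φ * ψ̃)(x) = ∫ φ(x - y) conj(ψ(-y)) dy`. -/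
def tildeConv (θ : Measure G) (φ ψ : G → ℂ) : G → ℂ :=
  fun x => ∫ y, φ (x - y) * (starRingEnd ℂ) (ψ (-y)) ∂θ

/-- A pure point measure. -/
def PurePointM {X : Type*} [MeasurableSpace X] (σ : Measure X) : Prop :=
  ∀ B : Set X, MeasurableSet B → σ B = ∑' x : B, σ {(x : X)}

end CharUse

section TB

variable (Γ : Type*) [MeasurableSpace Γ] [TopologicalSpace Γ] [AddCommGroup Γ]

/-- A translation bounded complex (Radon) measure, given by its total variation
measure together with a unimodular density (polar decomposition). -/
structure TBMeasure where
  tv : Measure Γ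
  dens : Γ → ℂ
  dens_meas : Measurable dens
  dens_norm : ∀ x, ‖dens x‖ = 1
  bounded : ∀ K : Set Γ, IsCompact K → ∃ C : ℝ≥0∞, C ≠ ⊤ ∧ ∀ t : Γ, tv (t +ᵥ K) ≤ C

end TB

section TBUse

variable {G : Type*} [MeasurableSpace G] [TopologicalSpace G] [AddCommGroup G]

/-- `∫ f dμ` for a translation bounded complex measure. -/
def TBMeasure.integral (μ : TBMeasure G) (f : G → ℂ) : ℂ := ∫ x, f x * μ.dens x ∂μ.tv

/-- `(μ * φ)(t) = ∫ φ(t - s) dμ(s)`. -/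
def TBMeasure.conv (μ : TBMeasure G) (φ : G → ℂ) : G → ℂ :=
  fun t => ∫ s, φ (t - s) * μ.dens s ∂μ.tv

/-- `(1/θ(A_n)) · (μ|_{A_n} * ν̃|_{-A_n})(φ)`, the `n`-th Eberlein pairing of `μ` with `ν̃`. -/
def ebPair (θ : Measure G) (A : ℕ → Set G) (μ ν : TBMeasure G) (φ : G → ℂ) (n : ℕ) : ℂ :=
  (∫ s in A n, ∫ u in A n, φ (s - u) * μ.dens s * (starRingEnd ℂ) (ν.dens u) ∂ν.tv ∂μ.tv) /
    ((θ (A n)).toReal : ℂ)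

/-- Fourier–Bohr coefficient of a translation bounded measure along `A`. -/
def FBTendstoM (θ : Measure G) (A : ℕ → Set G) (μ : TBMeasure G) (χ : Char G) (a : ℂ) : Prop :=
  Tendsto (fun n =>
      (∫ t in A n, (starRingEnd ℂ) ((χ : C(G, ℂ)) t) * μ.dens t ∂μ.tv) /
        ((θ (A n)).toReal : ℂ))
    atTop (𝓝 a)

/-- `σ` is the Fourier transform of the positive definite measure `γ`:
`∫_{Ĝ} |φ̌|² dσ = ∫_G (φ * φ̃) dγ` for all `φ ∈ C_c(G)`. -/
def IsFTOf (θ : Measure G) (γ : TBMeasure G) (σ : Measure (Char G)) : Prop :=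
  ∀ φ : G → ℂ, IsCc φ → ∃ r : ℝ, 0 ≤ r ∧
    γ.integral (tildeConv θ φ φ) = (r : ℂ) ∧
    (∫⁻ χ, ENNReal.ofReal (‖checkFn θ φ χ‖ ^ 2) ∂σ) = ENNReal.ofReal r

end TBUse

section UniformDefs

variable {H : Type*} [UniformSpace H]

/-- `C_u(G)`: bounded uniformly continuous functions. -/
def CuFun (f : H → ℂ) : Prop := UniformContinuous f ∧ ∃ C : ℝ, ∀ x, ‖f x‖ ≤ C

/-- Bohr (strong) almost periodicity. -/
def BohrAP [AddCommGroup H] (f : H → ℂ) : Prop :=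
  CuFun f ∧ ∀ ε : ℝ, 0 < ε → RelDense {t : H | ∀ x, ‖f x - f (x - t)‖ ≤ ε}

end UniformDefs

end MAP

open MAP

private lemma relDense_mono {G : Type*} [TopologicalSpace G] [AddCommGroup G]
    {S T : Set G} (h : RelDense S) (hst : S ⊆ T) : RelDense T := by
  obtain ⟨K, hK, hKd⟩ := h
  exact ⟨K, hK, fun g => by obtain ⟨t, ht, htg⟩ := hKd g; exact ⟨t, hst ht, htg⟩⟩

private lemma pow_le_aux {a M p : ℝ} (ha : 0 ≤ a) (haM : a ≤ M) (hp : 1 ≤ p) :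
    a ^ p ≤ M ^ (p - 1) * a := by
  rcases eq_or_lt_of_le ha with h | h
  · rw [← h, Real.zero_rpow (by linarith), mul_zero]
  · have h1 : a ^ p = a ^ (p - 1) * a := by
      rw [← Real.rpow_add_one h.ne' (p - 1)]
      norm_num
    rw [h1]
    have h2 : a ^ (p - 1) ≤ M ^ (p - 1) :=
      Real.rpow_le_rpow ha haM (by linarith)
    exact mul_le_mul_of_nonneg_right h2 ha

private lemma pow_down_aux {a δ p : ℝ} (ha : 0 ≤ a) (hδ : 0 < δ) (hp : 1 ≤ p) :
    a ≤ δ + a ^ p / δ ^ (p - 1) := by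
  have hδp : 0 < δ ^ (p - 1) := Real.rpow_pos_of_pos hδ _
  rcases le_or_gt a δ with h | h
  · have : 0 ≤ a ^ p / δ ^ (p - 1) := div_nonneg (Real.rpow_nonneg ha _) hδp.le
    linarith
  · have hap : 0 < a := hδ.trans h
    have h1 : a * δ ^ (p - 1) ≤ a ^ p := by
      have h2 : δ ^ (p - 1) ≤ a ^ (p - 1) :=
        Real.rpow_le_rpow hδ.le h.le (by linarith)
      have h3 : a ^ p = a ^ (p - 1) * a := by
        rw [← Real.rpow_add_one hap.ne' (p - 1)]
        norm_num
      calc a * δ ^ (p - 1) ≤ a * a ^ (p - 1) :=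
            mul_le_mul_of_nonneg_left h2 hap.le
        _ = a ^ p := by rw [h3, mul_comm]
    have : a ≤ a ^ p / δ ^ (p - 1) := (le_div_iff₀ hδp).mpr h1
    linarith

private lemma lpAvg_up {G : Type*} [MeasurableSpace G] [TopologicalSpace G] [AddCommGroup G]
    (θ : Measure G) (B : Set G) {p M : ℝ} (hp : 1 ≤ p) (hM : 0 ≤ M)
    (g : G → ℂ) (hg : ∀ s, ‖g s‖ ≤ M) :
    lpAvg θ B p g ≤ ENNReal.ofReal (M ^ (p - 1)) * lpAvg θ B 1 g := by
  have h1 : (∫⁻ t in B, ENNReal.ofReal (‖g t‖ ^ p) ∂θ)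
      ≤ ENNReal.ofReal (M ^ (p - 1)) * ∫⁻ t in B, ENNReal.ofReal (‖g t‖ ^ (1 : ℝ)) ∂θ := by
    rw [← lintegral_const_mul' _ _ ENNReal.ofReal_ne_top]
    refine lintegral_mono fun t => ?_
    rw [← ENNReal.ofReal_mul (Real.rpow_nonneg hM _), Real.rpow_one]
    exact ENNReal.ofReal_le_ofReal (pow_le_aux (norm_nonneg _) (hg t) hp)
  calc lpAvg θ B p g ≤ (ENNReal.ofReal (M ^ (p - 1)) *
        ∫⁻ t in B, ENNReal.ofReal (‖g t‖ ^ (1 : ℝ)) ∂θ) / θ B :=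
        ENNReal.div_le_div_right h1 _
    _ = ENNReal.ofReal (M ^ (p - 1)) * lpAvg θ B 1 g := by
        rw [lpAvg, mul_div_assoc]

private lemma lpAvg_down {G : Type*} [MeasurableSpace G] [TopologicalSpace G] [AddCommGroup G]
    (θ : Measure G) (B : Set G) {p δ : ℝ} (hp : 1 ≤ p) (hδ : 0 < δ)
    (hB0 : θ B ≠ 0) (hBt : θ B ≠ ⊤) (g : G → ℂ) :
    lpAvg θ B 1 g ≤ ENNReal.ofReal δ + lpAvg θ B p g * (ENNReal.ofReal (δ ^ (p - 1)))⁻¹ := by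
  have hδp : 0 < δ ^ (p - 1) := Real.rpow_pos_of_pos hδ _
  set c := ENNReal.ofReal (δ ^ (p - 1)) with hc
  have hc0 : c ≠ 0 := (ENNReal.ofReal_pos.mpr hδp).ne'
  have hcinv : c⁻¹ ≠ ⊤ := by simp [hc0]
  have h1 : (∫⁻ t in B, ENNReal.ofReal (‖g t‖ ^ (1 : ℝ)) ∂θ)
      ≤ ENNReal.ofReal δ * θ B + (∫⁻ t in B, ENNReal.ofReal (‖g t‖ ^ p) ∂θ) * c⁻¹ := by
    have hpt : ∀ t, ENNReal.ofReal (‖g t‖ ^ (1 : ℝ))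
        ≤ ENNReal.ofReal δ + ENNReal.ofReal (‖g t‖ ^ p) * c⁻¹ := by
      intro t
      rw [Real.rpow_one]
      have := pow_down_aux (norm_nonneg (g t)) hδ hp
      calc ENNReal.ofReal ‖g t‖ ≤ ENNReal.ofReal (δ + ‖g t‖ ^ p / δ ^ (p - 1)) :=
            ENNReal.ofReal_le_ofReal this
        _ = ENNReal.ofReal δ + ENNReal.ofReal (‖g t‖ ^ p) * c⁻¹ := by
            rw [ENNReal.ofReal_add hδ.le
              (div_nonneg (Real.rpow_nonneg (norm_nonneg _) _) hδp.le),
              ENNReal.ofReal_div_of_pos hδp, div_eq_mul_inv]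
    calc (∫⁻ t in B, ENNReal.ofReal (‖g t‖ ^ (1 : ℝ)) ∂θ)
        ≤ ∫⁻ t in B, (ENNReal.ofReal δ + ENNReal.ofReal (‖g t‖ ^ p) * c⁻¹) ∂θ :=
          lintegral_mono fun t => hpt t
      _ = ENNReal.ofReal δ * θ B + (∫⁻ t in B, ENNReal.ofReal (‖g t‖ ^ p) ∂θ) * c⁻¹ := by
          rw [lintegral_add_left measurable_const, lintegral_mul_const' _ _ hcinv,
            setLIntegral_const]
  calc lpAvg θ B 1 g
      ≤ (ENNReal.ofReal δ * θ B + (∫⁻ t in B, ENNReal.ofReal (‖g t‖ ^ p) ∂θ) * c⁻¹) / θ B :=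
        ENNReal.div_le_div_right h1 _
    _ = ENNReal.ofReal δ * (θ B / θ B) +
        ((∫⁻ t in B, ENNReal.ofReal (‖g t‖ ^ p) ∂θ) / θ B) * c⁻¹ := by
        rw [ENNReal.add_div, mul_div_assoc, div_eq_mul_inv, div_eq_mul_inv, div_eq_mul_inv,
          mul_right_comm]
    _ = ENNReal.ofReal δ + lpAvg θ B p g * c⁻¹ := by
        rw [ENNReal.div_self hB0 hBt, mul_one, lpAvg]

theorem statement3
    {G : Type*} [AddCommGroup G] [UniformSpace G] [IsUniformAddGroup G]
    [LocallyCompactSpace G] [SigmaCompactSpace G] [T2Space G]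
    [MeasurableSpace G] [BorelSpace G]
    (θ : Measure G) [θ.IsAddHaarMeasure]
    (A : ℕ → Set G) (hA : IsVanHove θ A)
    (f : G → ℂ) (hf : CuFun f) :
    (MeanAP θ A f ↔
      ∃ p : ℝ, 1 ≤ p ∧ ∀ ε : ℝ, 0 < ε →
        RelDense {t : G | besSN θ A p (fun s => f s - f (s - t)) < ENNReal.ofReal ε}) ∧
    (MeanAP θ A f ↔
      ∀ p : ℝ, 1 ≤ p → ∀ ε : ℝ, 0 < ε →
        RelDense {t : G | besSN θ A p (fun s => f s - f (s - t)) < ENNReal.ofReal ε}) := by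
  obtain ⟨hfu, C, hC⟩ := hf
  set M := 2 * C + 1 with hMdef
  have hC0 : 0 ≤ C := le_trans (norm_nonneg (f 0)) (hC 0)
  have hM0 : 0 < M := by simp only [hMdef]; linarith
  have hbound : ∀ t s : G, ‖f s - f (s - t)‖ ≤ M := by
    intro t s
    calc ‖f s - f (s - t)‖ ≤ ‖f s‖ + ‖f (s - t)‖ := norm_sub_le _ _
      _ ≤ M := by have := hC s; have := hC (s - t); simp only [hMdef]; linarith
  have hA0 : ∀ n, θ (A n) ≠ 0 := fun n =>
    ((hA.isOpen n).measure_pos θ (hA.nonempty n)).ne'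
  have hAt : ∀ n, θ (A n) ≠ ⊤ := fun n =>
    (lt_of_le_of_lt (measure_mono subset_closure) (hA.relCompact n).measure_lt_top).ne
  -- From the p = 1 case to the general p case
  have key1 : MeanAP θ A f → ∀ p : ℝ, 1 ≤ p → ∀ ε : ℝ, 0 < ε →
      RelDense {t : G | besSN θ A p (fun s => f s - f (s - t)) < ENNReal.ofReal ε} := by
    intro h p hp ε hε
    have hp0 : (0 : ℝ) < p := by linarith
    have hMp : 0 < M ^ (p - 1) := Real.rpow_pos_of_pos hM0 _
    have hε2p : 0 < (ε / 2) ^ p := Real.rpow_pos_of_pos (by linarith) _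
    set ε1 := (ε / 2) ^ p / M ^ (p - 1) with hε1def
    have hε1 : 0 < ε1 := div_pos hε2p hMp
    refine relDense_mono (h ε1 hε1) ?_
    intro t ht
    simp only [Set.mem_setOf_eq] at ht ⊢
    set g : G → ℂ := fun s => f s - f (s - t) with hg
    have ht' : limsup (fun n => lpAvg θ (A n) 1 g) atTop < ENNReal.ofReal ε1 := by
      have : besSN θ A 1 g = limsup (fun n => lpAvg θ (A n) 1 g) atTop := by
        rw [besSN]; norm_num
      rwa [this] at ht
    have hev : ∀ᶠ n in atTop, lpAvg θ (A n) 1 g < ENNReal.ofReal ε1 :=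
      Filter.eventually_lt_of_limsup_lt ht'
    have hev2 : ∀ᶠ n in atTop, lpAvg θ (A n) p g ≤ ENNReal.ofReal ((ε / 2) ^ p) := by
      filter_upwards [hev] with n hn
      calc lpAvg θ (A n) p g ≤ ENNReal.ofReal (M ^ (p - 1)) * lpAvg θ (A n) 1 g :=
            lpAvg_up θ (A n) hp hM0.le g (hbound t)
        _ ≤ ENNReal.ofReal (M ^ (p - 1)) * ENNReal.ofReal ε1 :=
            mul_le_mul_right hn.le _
        _ = ENNReal.ofReal ((ε / 2) ^ p) := by
            rw [← ENNReal.ofReal_mul hMp.le, hε1def, mul_div_cancel₀ _ hMp.ne']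
    have hls : limsup (fun n => lpAvg θ (A n) p g) atTop ≤ ENNReal.ofReal ((ε / 2) ^ p) :=
      Filter.limsup_le_of_le (by isBoundedDefault) hev2
    calc besSN θ A p g
        ≤ (ENNReal.ofReal ((ε / 2) ^ p)) ^ (1 / p) :=
          ENNReal.rpow_le_rpow hls (by positivity)
      _ = ENNReal.ofReal (ε / 2) := by
          rw [ENNReal.ofReal_rpow_of_pos hε2p, one_div,
            Real.rpow_rpow_inv (by linarith) hp0.ne']
      _ < ENNReal.ofReal ε := ENNReal.ofReal_lt_ofReal_iff hε |>.mpr (by linarith)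
  -- From the general p case back to the p = 1 case
  have key2 : ∀ p : ℝ, 1 ≤ p → (∀ ε : ℝ, 0 < ε →
      RelDense {t : G | besSN θ A p (fun s => f s - f (s - t)) < ENNReal.ofReal ε}) →
      MeanAP θ A f := by
    intro p hp H ε hε
    have hp0 : (0 : ℝ) < p := by linarith
    set δ := ε / 2 with hδdef
    have hδ : 0 < δ := by simp only [hδdef]; linarith
    have hδp : 0 < δ ^ (p - 1) := Real.rpow_pos_of_pos hδ _
    set r : ℝ := δ ^ (p - 1) * (δ / 2) with hrdef
    have hr : 0 < r := mul_pos hδp (by linarith)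
    set ε'' : ℝ := r ^ (1 / p) with hε''def
    have hε'' : 0 < ε'' := Real.rpow_pos_of_pos hr _
    refine relDense_mono (H ε'' hε'') ?_
    intro t ht
    simp only [Set.mem_setOf_eq] at ht ⊢
    set g : G → ℂ := fun s => f s - f (s - t) with hg
    have hLp : limsup (fun n => lpAvg θ (A n) p g) atTop < ENNReal.ofReal r := by
      have h1 : (besSN θ A p g) ^ p < (ENNReal.ofReal ε'') ^ p :=
        ENNReal.rpow_lt_rpow ht hp0
      have h2 : (besSN θ A p g) ^ p = limsup (fun n => lpAvg θ (A n) p g) atTop := by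
        rw [besSN, ← ENNReal.rpow_mul, one_div, inv_mul_cancel₀ hp0.ne', ENNReal.rpow_one]
      have h3 : (ENNReal.ofReal ε'') ^ p = ENNReal.ofReal r := by
        rw [ENNReal.ofReal_rpow_of_pos hε'', hε''def, one_div,
          Real.rpow_inv_rpow hr.le hp0.ne']
      rw [h2, h3] at h1
      exact h1
    have hev : ∀ᶠ n in atTop, lpAvg θ (A n) p g < ENNReal.ofReal r :=
      Filter.eventually_lt_of_limsup_lt hLp
    have hev2 : ∀ᶠ n in atTop, lpAvg θ (A n) 1 g ≤ ENNReal.ofReal (δ + δ / 2) := by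
      filter_upwards [hev] with n hn
      have hc0 : ENNReal.ofReal (δ ^ (p - 1)) ≠ 0 := (ENNReal.ofReal_pos.mpr hδp).ne'
      calc lpAvg θ (A n) 1 g
          ≤ ENNReal.ofReal δ + lpAvg θ (A n) p g * (ENNReal.ofReal (δ ^ (p - 1)))⁻¹ :=
            lpAvg_down θ (A n) hp hδ (hA0 n) (hAt n) g
        _ ≤ ENNReal.ofReal δ + ENNReal.ofReal r * (ENNReal.ofReal (δ ^ (p - 1)))⁻¹ :=
            add_le_add_right (mul_le_mul_left hn.le _) _
        _ = ENNReal.ofReal (δ + δ / 2) := by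
            rw [hrdef, ENNReal.ofReal_mul hδp.le, mul_comm (ENNReal.ofReal (δ ^ (p - 1))),
              mul_assoc, ENNReal.mul_inv_cancel hc0 ENNReal.ofReal_ne_top, mul_one,
              ← ENNReal.ofReal_add hδ.le (by linarith)]
    have hls : limsup (fun n => lpAvg θ (A n) 1 g) atTop ≤ ENNReal.ofReal (δ + δ / 2) :=
      Filter.limsup_le_of_le (by isBoundedDefault) hev2
    have hbes : besSN θ A 1 g = limsup (fun n => lpAvg θ (A n) 1 g) atTop := by
      rw [besSN]; norm_num
    rw [hbes]
    calc limsup (fun n => lpAvg θ (A n) 1 g) atTop ≤ ENNReal.ofReal (δ + δ / 2) := hls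
      _ < ENNReal.ofReal ε := ENNReal.ofReal_lt_ofReal_iff hε |>.mpr (by
          simp only [hδdef]; linarith)
  have hMAP1 : MeanAP θ A f ↔ ∀ ε : ℝ, 0 < ε →
      RelDense {t : G | besSN θ A 1 (fun s => f s - f (s - t)) < ENNReal.ofReal ε} :=
    Iff.rfl
  constructor
  · constructor
    · intro h
      exact ⟨1, le_rfl, hMAP1.mp h⟩
    · rintro ⟨p, hp, h⟩
      exact key2 p hp h
  · constructor
    · intro h p hp
      exact key1 h p hp
    · intro h
      exact key2 1 le_rfl (h 1 le_rfl)
end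
end

section
/- Let 𝒜 be a van Hove sequence. The set MAP_𝒜(G) of functions in C_u(G) that are mean almost periodic with respect to 𝒜 is a ℂ-linear subspace of C_u(G), is closed in C_u(G) with respect to the sup-norm, and is invariant under translations (f ∈ MAP_𝒜(G) implies τ_t f ∈ MAP_𝒜(G) for all t ∈ G). -/
open MeasureTheory Filter Topology
open scoped ENNReal Pointwise

noncomputable section

open MAP


section Aux

open MAP ENNReal
open scoped Uniformity
set_option linter.unusedSectionVars false
set_option linter.unusedVariables false

lemma myLimsupAddLe (u v : ℕ → ℝ≥0∞) :
    limsup (fun n => u n + v n) atTop ≤ limsup u atTop + limsup v atTop := by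
  rcases eq_top_or_lt_top (limsup u atTop) with hu | hu
  · rw [hu, top_add]; exact le_top
  rcases eq_top_or_lt_top (limsup v atTop) with hv | hv
  · rw [hv, add_top]; exact le_top
  refine ENNReal.le_of_forall_pos_le_add fun ε hε _ => ?_
  have hhalf : ((ε : ℝ≥0∞) / 2) ≠ 0 := by
    simp [ENNReal.div_eq_zero_iff, hε.ne']
  have h1 : ∀ᶠ n in atTop, u n < limsup u atTop + (ε : ℝ≥0∞) / 2 :=
    eventually_lt_of_limsup_lt (ENNReal.lt_add_right hu.ne hhalf)
  have h2 : ∀ᶠ n in atTop, v n < limsup v atTop + (ε : ℝ≥0∞) / 2 :=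
    eventually_lt_of_limsup_lt (ENNReal.lt_add_right hv.ne hhalf)
  have hb : limsup (fun n => u n + v n) atTop ≤
      (limsup u atTop + (ε : ℝ≥0∞) / 2) + (limsup v atTop + (ε : ℝ≥0∞) / 2) := by
    refine limsup_le_of_le (by isBoundedDefault) ?_
    filter_upwards [h1, h2] with n hn1 hn2
    exact add_le_add hn1.le hn2.le
  calc limsup (fun n => u n + v n) atTop
      ≤ (limsup u atTop + (ε : ℝ≥0∞) / 2) + (limsup v atTop + (ε : ℝ≥0∞) / 2) := hb
    _ = limsup u atTop + limsup v atTop + ((ε : ℝ≥0∞) / 2 + (ε : ℝ≥0∞) / 2) := by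
        abel
    _ = limsup u atTop + limsup v atTop + (ε : ℝ≥0∞) := by rw [ENNReal.add_halves]

variable {G : Type*} [AddCommGroup G] [UniformSpace G] [IsUniformAddGroup G]
    [LocallyCompactSpace G] [SigmaCompactSpace G] [T2Space G]
    [MeasurableSpace G] [BorelSpace G]

lemma myRelDenseMono {S T : Set G} (hST : S ⊆ T) (h : RelDense S) : RelDense T := by
  obtain ⟨K, hK, hcov⟩ := h
  exact ⟨K, hK, fun g => by obtain ⟨t, ht, hgt⟩ := hcov g; exact ⟨t, hST ht, hgt⟩⟩

variable (θ : Measure G) [θ.IsAddHaarMeasure] (A : ℕ → Set G)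

lemma besSNOneDef (h : G → ℂ) :
    besSN θ A 1 h = limsup (fun n => (∫⁻ t in A n, ENNReal.ofReal ‖h t‖ ∂θ) / θ (A n)) atTop := by
  have h1 : (1:ℝ)/1 = 1 := by norm_num
  simp only [besSN, lpAvg, h1, ENNReal.rpow_one, Real.rpow_one]

lemma besSNZero : besSN θ A 1 (fun _ => (0:ℂ)) = 0 := by
  rw [besSNOneDef]
  simp only [norm_zero, ENNReal.ofReal_zero, lintegral_zero, lintegral_const,
    zero_mul, ENNReal.zero_div, limsup_const]

lemma besSNLeConst {h : G → ℂ} {C : ℝ} (hC : ∀ x, ‖h x‖ ≤ C) :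
    besSN θ A 1 h ≤ ENNReal.ofReal C := by
  rw [besSNOneDef]
  refine limsup_le_of_le (by isBoundedDefault) (Eventually.of_forall fun n => ?_)
  refine ENNReal.div_le_of_le_mul ?_
  calc (∫⁻ t in A n, ENNReal.ofReal ‖h t‖ ∂θ)
      ≤ ∫⁻ _ in A n, ENNReal.ofReal C ∂θ :=
        lintegral_mono fun t => ENNReal.ofReal_le_ofReal (hC t)
    _ = ENNReal.ofReal C * θ (A n) := by rw [setLIntegral_const]

lemma besSNAddLe {h₁ h₂ : G → ℂ} (m₁ : Continuous h₁) :
    besSN θ A 1 (fun x => h₁ x + h₂ x) ≤ besSN θ A 1 h₁ + besSN θ A 1 h₂ := by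
  rw [besSNOneDef, besSNOneDef, besSNOneDef]
  refine le_trans (limsup_le_limsup (Eventually.of_forall fun n => ?_)) (myLimsupAddLe _ _)
  rw [← ENNReal.add_div]
  refine ENNReal.div_le_div_right ?_ _
  calc (∫⁻ t in A n, ENNReal.ofReal ‖h₁ t + h₂ t‖ ∂θ)
      ≤ ∫⁻ t in A n, (ENNReal.ofReal ‖h₁ t‖ + ENNReal.ofReal ‖h₂ t‖) ∂θ :=
        lintegral_mono fun t =>
          le_trans (ENNReal.ofReal_le_ofReal (norm_add_le _ _))
            (ENNReal.ofReal_add (norm_nonneg _) (norm_nonneg _)).le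
    _ = _ :=
        lintegral_add_left (ENNReal.measurable_ofReal.comp m₁.norm.measurable) _

lemma besSNNeg (h : G → ℂ) :
    besSN θ A 1 (fun x => -(h x)) = besSN θ A 1 h := by
  rw [besSNOneDef, besSNOneDef]
  simp only [norm_neg]

lemma besSNConstMulLe (c : ℂ) (h : G → ℂ) :
    besSN θ A 1 (fun x => c * h x) ≤ ENNReal.ofReal ‖c‖ * besSN θ A 1 h := by
  rw [besSNOneDef, besSNOneDef]
  have key : ∀ n, (∫⁻ t in A n, ENNReal.ofReal ‖c * h t‖ ∂θ) / θ (A n)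
      = ENNReal.ofReal ‖c‖ * ((∫⁻ t in A n, ENNReal.ofReal ‖h t‖ ∂θ) / θ (A n)) := by
    intro n
    have e1 : (fun t => ENNReal.ofReal ‖c * h t‖)
        = fun t => ENNReal.ofReal ‖c‖ * ENNReal.ofReal ‖h t‖ := by
      funext t
      rw [norm_mul, ENNReal.ofReal_mul (norm_nonneg _)]
    rw [show (∫⁻ t in A n, ENNReal.ofReal ‖c * h t‖ ∂θ)
        = ∫⁻ t in A n, ENNReal.ofReal ‖c‖ * ENNReal.ofReal ‖h t‖ ∂θ from by rw [e1],
      lintegral_const_mul' _ _ ENNReal.ofReal_ne_top, mul_div_assoc]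
  calc limsup (fun n => (∫⁻ t in A n, ENNReal.ofReal ‖c * h t‖ ∂θ) / θ (A n)) atTop
      = limsup (fun n =>
          ENNReal.ofReal ‖c‖ * ((∫⁻ t in A n, ENNReal.ofReal ‖h t‖ ∂θ) / θ (A n))) atTop := by
        refine limsup_congr (Eventually.of_forall fun n => ?_)
        exact key n
    _ = ENNReal.ofReal ‖c‖ *
          limsup (fun n => (∫⁻ t in A n, ENNReal.ofReal ‖h t‖ ∂θ) / θ (A n)) atTop :=
        ENNReal.limsup_const_mul_of_ne_top ENNReal.ofReal_ne_top
    _ ≤ _ := le_rfl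

lemma besSNCompSubLe (hA : IsVanHove θ A) {h : G → ℂ} {C : ℝ}
    (hC : ∀ x, ‖h x‖ ≤ C) (t : G) :
    besSN θ A 1 (fun s => h (s - t)) ≤ besSN θ A 1 h := by
  set g : G → ℝ≥0∞ := fun s => ENNReal.ofReal ‖h s‖ with hg
  have key : ∀ n, (∫⁻ s in A n, g (s - t) ∂θ)
      ≤ (∫⁻ s in A n, g s ∂θ) + ENNReal.ofReal C * θ (kBoundary {-t} (A n)) := by
    intro n
    have hAm : MeasurableSet (A n) := (hA.isOpen n).measurableSet
    set B : Set G := (fun x => x + t) ⁻¹' (A n) with hB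
    have hBm : MeasurableSet B := (continuous_add_right t).measurable hAm
    have step1 : (∫⁻ s in A n, g (s - t) ∂θ) = ∫⁻ s in B, g s ∂θ := by
      rw [← lintegral_indicator hAm, ← lintegral_indicator hBm,
        ← lintegral_add_right_eq_self (fun x => (A n).indicator (fun s => g (s - t)) x) t]
      congr 1
      funext x
      by_cases hx : x + t ∈ A n
      · simp [Set.indicator_apply, hx, hB, Set.mem_preimage, add_sub_cancel_right]
      · simp [Set.indicator_apply, hx, hB, Set.mem_preimage]
    have hsub : B \ A n ⊆ kBoundary {-t} (A n) := by
      intro x hx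
      refine Set.mem_union_left _ ⟨subset_closure ?_, hx.2⟩
      have hxx : x = (x + t) + (-t) := by abel
      rw [hxx]
      exact Set.add_mem_add hx.1 (Set.mem_singleton _)
    calc (∫⁻ s in A n, g (s - t) ∂θ) = ∫⁻ s in B, g s ∂θ := step1
      _ ≤ ∫⁻ s in (A n) ∪ (B \ A n), g s ∂θ := by
          refine lintegral_mono_set ?_
          intro x hx
          by_cases hxa : x ∈ A n
          · exact Or.inl hxa
          · exact Or.inr ⟨hx, hxa⟩
      _ ≤ (∫⁻ s in A n, g s ∂θ) + ∫⁻ s in B \ A n, g s ∂θ := lintegral_union_le _ _ _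
      _ ≤ (∫⁻ s in A n, g s ∂θ) + ENNReal.ofReal C * θ (kBoundary {-t} (A n)) := by
          refine add_le_add le_rfl ?_
          calc (∫⁻ s in B \ A n, g s ∂θ)
              ≤ ∫⁻ _ in B \ A n, ENNReal.ofReal C ∂θ :=
                lintegral_mono fun s => ENNReal.ofReal_le_ofReal (hC s)
            _ = ENNReal.ofReal C * θ (B \ A n) := setLIntegral_const _ _
            _ ≤ _ := mul_le_mul_right (measure_mono hsub) _
  rw [besSNOneDef, besSNOneDef]
  have h0 : Tendsto
      (fun n => ENNReal.ofReal C * (θ (kBoundary {-t} (A n)) / θ (A n))) atTop (𝓝 0) := by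
    have hb := hA.boundary {-t} isCompact_singleton
    simpa using ENNReal.Tendsto.const_mul hb (Or.inr ENNReal.ofReal_ne_top)
  calc limsup (fun n => (∫⁻ s in A n, ENNReal.ofReal ‖h (s - t)‖ ∂θ) / θ (A n)) atTop
      ≤ limsup (fun n => (∫⁻ s in A n, g s ∂θ) / θ (A n)
          + ENNReal.ofReal C * (θ (kBoundary {-t} (A n)) / θ (A n))) atTop := by
        refine limsup_le_limsup (Eventually.of_forall fun n => ?_)
        refine le_trans (ENNReal.div_le_div_right (key n) _) ?_
        rw [ENNReal.add_div, mul_div_assoc]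
    _ ≤ limsup (fun n => (∫⁻ s in A n, g s ∂θ) / θ (A n)) atTop
          + limsup (fun n => ENNReal.ofReal C * (θ (kBoundary {-t} (A n)) / θ (A n))) atTop :=
        myLimsupAddLe _ _
    _ = limsup (fun n => (∫⁻ s in A n, g s ∂θ) / θ (A n)) atTop := by
        rw [h0.limsup_eq, add_zero]

/-- The translation defect seminorm. -/
def Dsn (f : G → ℂ) (t : G) : ℝ≥0∞ := besSN θ A 1 fun s => f s - f (s - t)

lemma cuBound {f : G → ℂ} (hf : CuFun f) : ∃ C : ℝ, 0 ≤ C ∧ ∀ x, ‖f x‖ ≤ C := by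
  obtain ⟨C, hC⟩ := hf.2
  exact ⟨C, le_trans (norm_nonneg _) (hC 0), hC⟩

lemma DsnLeConst {f : G → ℂ} {C : ℝ} (hC : ∀ x, ‖f x‖ ≤ C) (t : G) :
    Dsn θ A f t ≤ ENNReal.ofReal (C + C) :=
  besSNLeConst θ A fun x => le_trans (norm_sub_le _ _) (add_le_add (hC _) (hC _))

set_option maxHeartbeats 1000000 in
lemma DsnSubadd (hA : IsVanHove θ A) {f : G → ℂ} (hf : CuFun f) (t u : G) :
    Dsn θ A f (t + u) ≤ Dsn θ A f t + Dsn θ A f u := by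
  obtain ⟨C, _, hC⟩ := cuBound hf
  have hfc : Continuous f := hf.1.continuous
  have e : (fun s => f s - f (s - (t + u)))
      = fun s => (f s - f (s - t)) + ((fun y => f y - f (y - u)) (s - t)) := by
    funext s
    simp only
    rw [← sub_sub]
    ring
  rw [Dsn, e]
  refine le_trans (besSNAddLe θ A (hfc.sub (hfc.comp (continuous_sub_right t)))) ?_
  refine add_le_add le_rfl ?_
  have hb : ∀ x, ‖f x - f (x - u)‖ ≤ C + C :=
    fun x => le_trans (norm_sub_le _ _) (add_le_add (hC _) (hC _))
  exact besSNCompSubLe θ A hA hb t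

set_option maxHeartbeats 1000000 in
lemma DsnNegLe (hA : IsVanHove θ A) {f : G → ℂ} (hf : CuFun f) (t : G) :
    Dsn θ A f (-t) ≤ Dsn θ A f t := by
  obtain ⟨C, _, hC⟩ := cuBound hf
  have e : (fun s => f s - f (s - (-t)))
      = fun s => -((fun y => f y - f (y - t)) (s - (-t))) := by
    funext s
    simp only [sub_neg_eq_add, add_sub_cancel_right, neg_sub]
  rw [Dsn, e, besSNNeg]
  have hb : ∀ x, ‖f x - f (x - t)‖ ≤ C + C :=
    fun x => le_trans (norm_sub_le _ _) (add_le_add (hC _) (hC _))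
  exact besSNCompSubLe θ A hA hb (-t)

lemma meanAPOfTB {f : G → ℂ}
    (h : ∀ ε : ℝ, 0 < ε → ∃ F : Finset G, ∀ g : G, ∃ c ∈ F,
      Dsn θ A f (g - c) < ENNReal.ofReal ε) :
    MeanAP θ A f := by
  intro ε hε
  obtain ⟨F, hF⟩ := h ε hε
  refine ⟨(F : Set G), F.finite_toSet.isCompact, fun g => ?_⟩
  obtain ⟨c, hc, hlt⟩ := hF g
  exact ⟨g - c, hlt, by simpa using hc⟩

lemma exNbhd {f : G → ℂ} (hf : CuFun f) {δ : ℝ} (hδ : 0 < δ) :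
    ∃ W ∈ 𝓝 (0 : G), ∀ v ∈ W, ∀ s, ‖f s - f (s - v)‖ ≤ δ := by
  have huc := hf.1
  have hU : {p : G × G | dist (f p.1) (f p.2) < δ} ∈ 𝓤 G := huc (Metric.dist_mem_uniformity hδ)
  rw [uniformity_eq_comap_nhds_zero G] at hU
  obtain ⟨W, hW, hWsub⟩ := hU
  refine ⟨W, hW, fun v hv s => ?_⟩
  have hp : ((s - v, s) : G × G).2 - (s - v, s).1 ∈ W := by
    simpa using hv
  have := hWsub hp
  simp only [Set.mem_setOf_eq] at this
  rw [dist_eq_norm] at this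
  calc ‖f s - f (s - v)‖ = ‖f (s - v) - f s‖ := (norm_sub_rev _ _)
    _ ≤ δ := this.le

lemma tbOfMeanAP (hA : IsVanHove θ A) {f : G → ℂ} (hf : CuFun f) (hm : MeanAP θ A f) :
    ∀ ε : ℝ, 0 < ε → ∃ F : Finset G, ∀ g : G, ∃ c ∈ F,
      Dsn θ A f (g - c) < ENNReal.ofReal ε := by
  intro ε hε
  have hε3 : 0 < ε / 3 := by linarith
  obtain ⟨K, hK, hKd⟩ := hm (ε / 3) hε3
  obtain ⟨W, hW0, hWp⟩ := exNbhd hf hε3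
  obtain ⟨Fs, _, hcover⟩ := hK.elim_nhds_subcover (fun k => (· - k) ⁻¹' W)
    (fun k _ => (continuous_sub_right k).continuousAt.preimage_mem_nhds (by simpa using hW0))
  refine ⟨Fs, fun g => ?_⟩
  obtain ⟨t, ht, htK⟩ := hKd g
  have hmem := hcover htK
  simp only [Set.mem_iUnion, Set.mem_preimage, exists_prop] at hmem
  obtain ⟨k, hkF, hgk⟩ := hmem
  refine ⟨k, hkF, ?_⟩
  have key : Dsn θ A f (g - k) ≤ Dsn θ A f ((g - t) - k) + Dsn θ A f t := by
    have e : g - k = ((g - t) - k) + t := by abel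
    rw [e]
    exact DsnSubadd θ A hA hf _ _
  have h1 : Dsn θ A f ((g - t) - k) ≤ ENNReal.ofReal (ε / 3) :=
    besSNLeConst θ A fun s => hWp _ hgk s
  have h2 : Dsn θ A f t < ENNReal.ofReal (ε / 3) := ht
  calc Dsn θ A f (g - k) ≤ Dsn θ A f ((g - t) - k) + Dsn θ A f t := key
    _ < ENNReal.ofReal (ε / 3) + ENNReal.ofReal (ε / 3) :=
        ENNReal.add_lt_add_of_le_of_lt (ne_top_of_le_ne_top ENNReal.ofReal_ne_top h1) h1 h2
    _ = ENNReal.ofReal (ε / 3 + ε / 3) := (ENNReal.ofReal_add hε3.le hε3.le).symm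
    _ < ENNReal.ofReal ε := by
        rw [ENNReal.ofReal_lt_ofReal_iff hε]
        linarith

end Aux

theorem statement4
    {G : Type*} [AddCommGroup G] [UniformSpace G] [IsUniformAddGroup G]
    [LocallyCompactSpace G] [SigmaCompactSpace G] [T2Space G]
    [MeasurableSpace G] [BorelSpace G]
    (θ : Measure G) [θ.IsAddHaarMeasure]
    (A : ℕ → Set G) (hA : IsVanHove θ A) :
    MeanAP θ A (fun _ => (0 : ℂ)) ∧
    (∀ f g : G → ℂ, CuFun f → CuFun g → MeanAP θ A f → MeanAP θ A g →
      MeanAP θ A (fun x => f x + g x)) ∧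
    (∀ (c : ℂ) (f : G → ℂ), CuFun f → MeanAP θ A f → MeanAP θ A (fun x => c * f x)) ∧
    (∀ (f : ℕ → G → ℂ) (g : G → ℂ), (∀ n, CuFun (f n) ∧ MeanAP θ A (f n)) → CuFun g →
      TendstoUniformly f g atTop → MeanAP θ A g) ∧
    (∀ (f : G → ℂ) (t : G), CuFun f → MeanAP θ A f → MeanAP θ A (fun s => f (s - t))) := by
  classical
  refine ⟨?_, ?_, ?_, ?_, ?_⟩
  · -- zero function
    intro ε hε
    refine ⟨{0}, isCompact_singleton, fun g => ⟨g, ?_, by simp⟩⟩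
    show besSN θ A 1 (fun s => (fun _ : G => (0:ℂ)) s - (fun _ : G => (0:ℂ)) (s - g))
        < ENNReal.ofReal ε
    have e : (fun s : G => (fun _ : G => (0:ℂ)) s - (fun _ : G => (0:ℂ)) (s - g))
        = fun _ : G => (0:ℂ) := by
      funext s; simp
    rw [e, besSNZero]
    exact ENNReal.ofReal_pos.mpr hε
  · -- sums
    intro f g hf hg hmf hmg
    have hfc : Continuous f := hf.1.continuous
    refine meanAPOfTB θ A ?_
    intro ε hε
    have hη : 0 < ε / 4 := by linarith
    obtain ⟨Ff, hFf⟩ := tbOfMeanAP θ A hA hf hmf (ε / 4) hη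
    obtain ⟨Fg, hFg⟩ := tbOfMeanAP θ A hA hg hmg (ε / 4) hη
    set w : G × G → G := fun p =>
      if h : ∃ x : G, Dsn θ A f (x - p.1) < ENNReal.ofReal (ε / 4) ∧
          Dsn θ A g (x - p.2) < ENNReal.ofReal (ε / 4)
      then h.choose else 0 with hw
    refine ⟨(Ff ×ˢ Fg).image w, fun y => ?_⟩
    obtain ⟨a, ha, hya⟩ := hFf y
    obtain ⟨b, hb, hyb⟩ := hFg y
    have hex : ∃ x : G, Dsn θ A f (x - a) < ENNReal.ofReal (ε / 4) ∧
        Dsn θ A g (x - b) < ENNReal.ofReal (ε / 4) := ⟨y, hya, hyb⟩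
    have hwx : Dsn θ A f (w (a, b) - a) < ENNReal.ofReal (ε / 4) ∧
        Dsn θ A g (w (a, b) - b) < ENNReal.ofReal (ε / 4) := by
      rw [hw]
      simp only [dif_pos hex]
      exact hex.choose_spec
    refine ⟨w (a, b), Finset.mem_image_of_mem w (Finset.mem_product.mpr ⟨ha, hb⟩), ?_⟩
    set x := w (a, b) with hx
    have hDf : Dsn θ A f (y - x) < ENNReal.ofReal (ε / 4) + ENNReal.ofReal (ε / 4) := by
      have e : y - x = (y - a) + (a - x) := by abel
      have h1 : Dsn θ A f (a - x) ≤ Dsn θ A f (x - a) := by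
        have e2 : a - x = -(x - a) := by abel
        rw [e2]
        exact DsnNegLe θ A hA hf _
      calc Dsn θ A f (y - x) ≤ Dsn θ A f (y - a) + Dsn θ A f (a - x) := by
            rw [e]; exact DsnSubadd θ A hA hf _ _
        _ < _ := ENNReal.add_lt_add hya (lt_of_le_of_lt h1 hwx.1)
    have hDg : Dsn θ A g (y - x) < ENNReal.ofReal (ε / 4) + ENNReal.ofReal (ε / 4) := by
      have e : y - x = (y - b) + (b - x) := by abel
      have h1 : Dsn θ A g (b - x) ≤ Dsn θ A g (x - b) := by
        have e2 : b - x = -(x - b) := by abel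
        rw [e2]
        exact DsnNegLe θ A hA hg _
      calc Dsn θ A g (y - x) ≤ Dsn θ A g (y - b) + Dsn θ A g (b - x) := by
            rw [e]; exact DsnSubadd θ A hA hg _ _
        _ < _ := ENNReal.add_lt_add hyb (lt_of_le_of_lt h1 hwx.2)
    have hsum : Dsn θ A (fun z => f z + g z) (y - x)
        ≤ Dsn θ A f (y - x) + Dsn θ A g (y - x) := by
      rw [Dsn, Dsn, Dsn]
      show besSN θ A 1 (fun s => (f s + g s) - (f (s - (y - x)) + g (s - (y - x)))) ≤ _
      have e : (fun s : G => (f s + g s) - (f (s - (y - x)) + g (s - (y - x))))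
          = fun s => (f s - f (s - (y - x))) + (g s - g (s - (y - x))) := by
        funext s; ring
      rw [e]
      exact besSNAddLe θ A (hfc.sub (hfc.comp (continuous_sub_right _)))
    calc Dsn θ A (fun z => f z + g z) (y - x)
        ≤ Dsn θ A f (y - x) + Dsn θ A g (y - x) := hsum
      _ < (ENNReal.ofReal (ε / 4) + ENNReal.ofReal (ε / 4))
          + (ENNReal.ofReal (ε / 4) + ENNReal.ofReal (ε / 4)) := ENNReal.add_lt_add hDf hDg
      _ = ENNReal.ofReal ε := by
          rw [← ENNReal.ofReal_add hη.le hη.le,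
            ← ENNReal.ofReal_add (by linarith : (0:ℝ) ≤ ε / 4 + ε / 4) (by linarith : (0:ℝ) ≤ ε / 4 + ε / 4)]
          congr 1
          ring
  · -- scalar multiples
    intro c f hf hmf
    by_cases hc : c = 0
    · subst hc
      intro ε hε
      refine ⟨{0}, isCompact_singleton, fun g => ⟨g, ?_, by simp⟩⟩
      show besSN θ A 1
          (fun s => (fun x => (0:ℂ) * f x) s - (fun x => (0:ℂ) * f x) (s - g))
          < ENNReal.ofReal ε
      have e : (fun s : G => (fun x => (0:ℂ) * f x) s - (fun x => (0:ℂ) * f x) (s - g))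
          = fun _ : G => (0:ℂ) := by
        funext s; simp
      rw [e, besSNZero]
      exact ENNReal.ofReal_pos.mpr hε
    · intro ε hε
      have hcpos : 0 < ‖c‖ := norm_pos_iff.mpr hc
      have hη : 0 < ε / ‖c‖ := div_pos hε hcpos
      refine myRelDenseMono ?_ (hmf (ε / ‖c‖) hη)
      intro t ht
      simp only [Set.mem_setOf_eq] at ht ⊢
      show besSN θ A 1 (fun s => c * f s - c * f (s - t)) < ENNReal.ofReal ε
      have e : (fun s : G => c * f s - c * f (s - t))
          = fun s => c * (f s - f (s - t)) := by
        funext s; ring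
      rw [e]
      calc besSN θ A 1 (fun s => c * (f s - f (s - t)))
          ≤ ENNReal.ofReal ‖c‖ * besSN θ A 1 (fun s => f s - f (s - t)) :=
            besSNConstMulLe θ A c _
        _ < ENNReal.ofReal ‖c‖ * ENNReal.ofReal (ε / ‖c‖) :=
            (ENNReal.mul_lt_mul_right (ENNReal.ofReal_pos.mpr hcpos).ne'
              ENNReal.ofReal_ne_top ht)
        _ = ENNReal.ofReal ε := by
            rw [← ENNReal.ofReal_mul hcpos.le, mul_comm, div_mul_cancel₀ _ hcpos.ne']
  · -- uniform limits
    intro f g hfn hg hconv ε hε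
    have hε3 : 0 < ε / 3 := by linarith
    obtain ⟨n, hn⟩ := (Metric.tendstoUniformly_iff.mp hconv (ε / 3) hε3).exists
    refine myRelDenseMono ?_ ((hfn n).2 (ε / 3) hε3)
    intro t ht
    simp only [Set.mem_setOf_eq] at ht ⊢
    have hgc : Continuous g := hg.1.continuous
    have hfc : Continuous (f n) := (hfn n).1.1.continuous
    have e : (fun s : G => g s - g (s - t))
        = fun s => (g s - f n s)
            + ((f n s - f n (s - t)) + (f n (s - t) - g (s - t))) := by
      funext s; ring
    rw [e]
    have h1 : besSN θ A 1 (fun s => g s - f n s) ≤ ENNReal.ofReal (ε / 3) :=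
      besSNLeConst θ A fun x => by
        have hx := hn x
        rw [dist_eq_norm] at hx
        exact hx.le
    have h3 : besSN θ A 1 (fun s => f n (s - t) - g (s - t)) ≤ ENNReal.ofReal (ε / 3) :=
      besSNLeConst θ A fun x => by
        have hx := hn (x - t)
        rw [dist_eq_norm] at hx
        rw [norm_sub_rev]
        exact hx.le
    calc besSN θ A 1 (fun s => (g s - f n s)
            + ((f n s - f n (s - t)) + (f n (s - t) - g (s - t))))
        ≤ besSN θ A 1 (fun s => g s - f n s)
          + besSN θ A 1 (fun s => (f n s - f n (s - t)) + (f n (s - t) - g (s - t))) :=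
          besSNAddLe θ A (hgc.sub hfc)
      _ ≤ besSN θ A 1 (fun s => g s - f n s)
          + (besSN θ A 1 (fun s => f n s - f n (s - t))
            + besSN θ A 1 (fun s => f n (s - t) - g (s - t))) :=
          add_le_add le_rfl
            (besSNAddLe θ A (hfc.sub (hfc.comp (continuous_sub_right t))))
      _ < ENNReal.ofReal (ε / 3) + (ENNReal.ofReal (ε / 3) + ENNReal.ofReal (ε / 3)) := by
          refine ENNReal.add_lt_add_of_le_of_lt
            (ne_top_of_le_ne_top ENNReal.ofReal_ne_top h1) h1 ?_
          exact ENNReal.add_lt_add_of_lt_of_le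
            (ne_top_of_le_ne_top ENNReal.ofReal_ne_top h3) ht h3
      _ = ENNReal.ofReal ε := by
          rw [← ENNReal.ofReal_add hε3.le hε3.le,
            ← ENNReal.ofReal_add hε3.le (by linarith : (0:ℝ) ≤ ε / 3 + ε / 3)]
          congr 1
          ring
  · -- translates
    intro f t hf hmf ε hε
    refine myRelDenseMono ?_ (hmf ε hε)
    intro u hu
    simp only [Set.mem_setOf_eq] at hu ⊢
    obtain ⟨C, _, hC⟩ := cuBound hf
    show besSN θ A 1 (fun s => f (s - t) - f (s - u - t)) < ENNReal.ofReal ε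
    have e : (fun s : G => f (s - t) - f (s - u - t))
        = fun s => (fun y => f y - f (y - u)) (s - t) := by
      funext s
      simp only
      rw [sub_right_comm]
    rw [e]
    have hb : ∀ x, ‖f x - f (x - u)‖ ≤ C + C :=
      fun x => le_trans (norm_sub_le _ _) (add_le_add (hC _) (hC _))
    exact lt_of_le_of_lt (besSNCompSubLe θ A hA hb t) hu
end
end

section
/- Let Λ ⊆ G be a Meyer set and 𝒜 = (A_n) a van Hove sequence. Then the measure δ_Λ is mean almost periodic with respect to 𝒜 if and only if for each ε > 0 the set {t ∈ G : limsup_n #((Λ Δ (t+Λ)) ∩ A_n)/|A_n| < ε} is relatively dense in G, where Δ denotes the symmetric difference of sets. -/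
set_option linter.unusedSectionVars false


open MeasureTheory Filter Topology
open scoped ENNReal Pointwise

noncomputable section

open MAP

namespace MAPAux
open MAP

variable {G : Type*} [AddCommGroup G] [TopologicalSpace G] [IsTopologicalAddGroup G]
    [LocallyCompactSpace G] [SigmaCompactSpace G] [T2Space G]
    [MeasurableSpace G] [BorelSpace G]

lemma UD_mono {S S' : Set G} (h : S' ⊆ S) (hS : UnifDiscrete S) : UnifDiscrete S' := by
  obtain ⟨U, h1, h2, h3⟩ := hS
  exact ⟨U, h1, h2, fun x hx y hy hxy => h3 x (h hx) y (h hy) hxy⟩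

lemma UD_vadd {S : Set G} (hS : UnifDiscrete S) (t : G) : UnifDiscrete (t +ᵥ S) := by
  obtain ⟨U, h1, h2, h3⟩ := hS
  refine ⟨U, h1, h2, fun x hx y hy hxy => ?_⟩
  obtain ⟨x', hx', rfl⟩ := hx
  obtain ⟨y', hy', rfl⟩ := hy
  have hne : x' ≠ y' := fun h => hxy (by rw [h])
  have := h3 x' hx' y' hy' hne
  ext z
  simp only [Set.mem_inter_iff, Set.mem_empty_iff_false, iff_false, not_and]
  intro hz1 hz2
  have hz1' : (z - t) ∈ x' +ᵥ U := by
    obtain ⟨u, hu, rfl⟩ := hz1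
    exact ⟨u, hu, by simp [vadd_eq_add]; abel⟩
  have hz2' : (z - t) ∈ y' +ᵥ U := by
    obtain ⟨u, hu, rfl⟩ := hz2
    exact ⟨u, hu, by simp [vadd_eq_add]; abel⟩
  have hmem : (z - t) ∈ (x' +ᵥ U) ∩ (y' +ᵥ U) := ⟨hz1', hz2'⟩
  rw [this] at hmem
  exact hmem

/-- a point set with disjoint `U`-translates meets each compact set finitely. -/
lemma exists_VV_subset {U : Set G} (hUo : IsOpen U) (hU0 : (0:G) ∈ U) :
    ∃ V : Set G, IsOpen V ∧ (0:G) ∈ V ∧ ∀ a ∈ V, ∀ b ∈ V, a - b ∈ U := by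
  have hc : Continuous fun p : G × G => p.1 - p.2 := continuous_sub
  have h0 : (fun p : G × G => p.1 - p.2) (0, 0) = 0 := by simp
  have hmem : (fun p : G × G => p.1 - p.2) ⁻¹' U ∈ 𝓝 ((0:G), (0:G)) := by
    apply hc.continuousAt.preimage_mem_nhds
    simpa using hUo.mem_nhds hU0
  rw [mem_nhds_prod_iff'] at hmem
  obtain ⟨u, v, hu, h0u, hv, h0v, huv⟩ := hmem
  exact ⟨u ∩ v, hu.inter hv, ⟨h0u, h0v⟩,
    fun a ha b hb => huv (Set.mk_mem_prod ha.1 hb.2)⟩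

lemma UD_finite_inter {S : Set G} (hS : UnifDiscrete S) {B : Set G} (hB : IsCompact B) :
    (S ∩ B).Finite := by
  obtain ⟨U, hUo, hU0, hdisj⟩ := hS
  obtain ⟨V, hVo, hV0, hVV⟩ := exists_VV_subset hUo hU0
  obtain ⟨F, _, hcov⟩ := hB.elim_nhds_subcover (fun b => b +ᵥ V)
    (fun b _ => (hVo.vadd b).mem_nhds ⟨0, hV0, by simp⟩)
  have hsub : S ∩ B ⊆ ⋃ b ∈ F, S ∩ (b +ᵥ V) := by
    intro x hx
    obtain ⟨b, hbF, hxb⟩ := Set.mem_iUnion₂.1 (hcov hx.2)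
    exact Set.mem_iUnion₂.2 ⟨b, hbF, hx.1, hxb⟩
  refine Set.Finite.subset (Set.Finite.biUnion F.finite_toSet fun b _ => ?_) hsub
  refine Set.Subsingleton.finite fun x hx y hy => ?_
  by_contra hxy
  have hxyU : x - y ∈ U := by
    obtain ⟨vx, hvx, rfl⟩ := hx.2
    obtain ⟨vy, hvy, rfl⟩ := hy.2
    have heq : (b +ᵥ vx) - (b +ᵥ vy) = vx - vy := by
      simp only [vadd_eq_add]; abel
    rw [heq]
    exact hVV vx hvx vy hvy
  have : x ∈ (x +ᵥ U) ∩ (y +ᵥ U) :=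
    ⟨⟨0, hU0, by simp⟩, ⟨x - y, hxyU, by simp [vadd_eq_add]⟩⟩
  rw [hdisj x hx.1 y hy.1 hxy] at this
  exact this

lemma UD_countable {S : Set G} (hS : UnifDiscrete S) : S.Countable := by
  have : S = ⋃ n, S ∩ compactCovering G n := by
    rw [← Set.inter_iUnion, iUnion_compactCovering, Set.inter_univ]
  rw [this]
  exact Set.countable_iUnion fun n => (UD_finite_inter hS (isCompact_compactCovering G n)).countable

/-- counting lemma: a good window for counting. -/
lemma UD_window {S : Set G} (hS : UnifDiscrete S) (θ : Measure G) [θ.IsAddHaarMeasure] :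
    ∃ U : Set G, IsOpen U ∧ (0:G) ∈ U ∧ IsCompact (closure U) ∧ 0 < θ U ∧ θ U < ⊤ ∧
      ∀ B : Set G, (S ∩ B).Finite → ((S ∩ B).ncard : ℝ≥0∞) * θ U ≤ θ (B + U) := by
  obtain ⟨U, hUo, hU0, hdisj⟩ := hS
  obtain ⟨N, hNc, h0N, hNU⟩ := exists_compact_subset hUo hU0
  set U' := interior N with hU'
  have hU'o : IsOpen U' := isOpen_interior
  have hU'U : U' ⊆ U := interior_subset.trans hNU
  have hcl : IsCompact (closure U') :=
    hNc.of_isClosed_subset isClosed_closure (closure_minimal interior_subset hNc.isClosed)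
  refine ⟨U', hU'o, h0N, hcl, hU'o.measure_pos θ ⟨0, h0N⟩,
    lt_of_le_of_lt (measure_mono interior_subset) hNc.measure_lt_top, fun B hfin => ?_⟩
  classical
  have hdisj' : (↑hfin.toFinset : Set G).PairwiseDisjoint (fun x => x +ᵥ U') := by
    intro x hx y hy hxy
    rw [Set.Finite.coe_toFinset] at hx hy
    rw [Function.onFun, Set.disjoint_iff_inter_eq_empty]
    have h := hdisj x hx.1 y hy.1 hxy
    refine Set.eq_empty_of_subset_empty ?_
    rw [← h]
    exact Set.inter_subset_inter (Set.vadd_set_mono hU'U) (Set.vadd_set_mono hU'U)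
  have hmeas := measure_biUnion_finset hdisj' (fun b _ => (hU'o.vadd b).measurableSet)
    (μ := θ)
  have hsub : (⋃ b ∈ hfin.toFinset, b +ᵥ U') ⊆ B + U' := by
    intro z hz
    obtain ⟨b, hbF, hb⟩ := Set.mem_iUnion₂.1 hz
    rw [Set.Finite.mem_toFinset] at hbF
    obtain ⟨u, hu, rfl⟩ := hb
    exact ⟨b, hbF.2, u, hu, rfl⟩
  calc ((S ∩ B).ncard : ℝ≥0∞) * θ U'
      = ∑ _b ∈ hfin.toFinset, θ U' := by
        rw [Finset.sum_const, nsmul_eq_mul, Set.ncard_eq_toFinset_card _ hfin]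
    _ = ∑ b ∈ hfin.toFinset, θ (b +ᵥ U') := by
        refine Finset.sum_congr rfl fun b _ => ?_
        rw [measure_vadd]
    _ = θ (⋃ b ∈ hfin.toFinset, b +ᵥ U') := hmeas.symm
    _ ≤ θ (B + U') := measure_mono hsub



section KB

variable (Aset K V : Set G)

lemma kB_mono {A K K' : Set G} (h : K ⊆ K') : kBoundary K A ⊆ kBoundary K' A := by
  unfold kBoundary
  apply Set.union_subset_union
  · exact Set.diff_subset_diff_left (closure_mono (Set.add_subset_add_left h))
  · exact Set.inter_subset_inter_left _ (Set.sub_subset_sub Set.Subset.rfl h)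

lemma kB_add_subset (A K V : Set G) :
    kBoundary K A + V ⊆
      kBoundary ((K + closure V) ∪ (-closure V) ∪ closure V ∪ (K + -closure V)) A := by
  set L := (K + closure V) ∪ (-closure V) ∪ closure V ∪ (K + -closure V) with hL
  have hL1 : K + closure V ⊆ L := by intro z hz; exact Or.inl (Or.inl (Or.inl hz))
  have hL2 : -closure V ⊆ L := by intro z hz; exact Or.inl (Or.inl (Or.inr hz))
  have hL3 : closure V ⊆ L := by intro z hz; exact Or.inl (Or.inr hz)
  have hL4 : K + -closure V ⊆ L := fun z hz => Or.inr hz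
  rintro z hz
  rw [Set.mem_add] at hz
  obtain ⟨x, hx, w, hw, rfl⟩ := hz
  rcases hx with hx | hx
  · by_cases hA : x + w ∈ A
    · exact Or.inr ⟨Set.mem_sub.2 ⟨x, hx.2, -w, hL2 (by rw [Set.mem_neg, neg_neg]; exact subset_closure hw), by abel⟩,
        subset_closure hA⟩
    · refine Or.inl ⟨?_, hA⟩
      have h1 : (fun y => y + w) '' closure (A + K) ⊆ closure ((fun y => y + w) '' (A + K)) :=
        image_closure_subset_closure_image (by continuity)
      have h2 : (fun y => y + w) '' (A + K) ⊆ A + L := by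
        rintro _ ⟨u, hu, rfl⟩
        rw [Set.mem_add] at hu
        obtain ⟨a, ha, k, hk, rfl⟩ := hu
        exact Set.mem_add.2 ⟨a, ha, k + w, hL1 (Set.mem_add.2 ⟨k, hk, w, subset_closure hw, rfl⟩),
          by abel⟩
      exact closure_mono h2 (h1 ⟨x, hx.1, rfl⟩)
  · obtain ⟨hx1, hx2⟩ := hx
    rw [Set.mem_sub] at hx1
    obtain ⟨a, ha, k, hk, hak⟩ := hx1
    by_cases hA : x + w ∈ A
    · refine Or.inr ⟨Set.mem_sub.2 ⟨a, ha, k + -w, hL4 (Set.mem_add.2 ⟨k, hk, -w,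
        (by rw [Set.mem_neg, neg_neg]; exact subset_closure hw), rfl⟩), ?_⟩, subset_closure hA⟩
      rw [← hak]; abel
    · refine Or.inl ⟨?_, hA⟩
      have h1 : (fun y => y + w) '' closure A ⊆ closure ((fun y => y + w) '' A) :=
        image_closure_subset_closure_image (by continuity)
      have h2 : (fun y => y + w) '' A ⊆ A + L := by
        rintro _ ⟨u, hu, rfl⟩
        exact Set.mem_add.2 ⟨u, hu, w, hL3 (subset_closure hw), rfl⟩
      exact closure_mono h2 (h1 ⟨x, hx2, rfl⟩)

lemma kB_L_compact {K V : Set G} (hK : IsCompact K) (hV : IsCompact (closure V)) :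
    IsCompact ((K + closure V) ∪ (-closure V) ∪ closure V ∪ (K + -closure V)) :=
  (((hK.add hV).union hV.neg).union hV).union (hK.add hV.neg)

lemma add_subset_union_kB (A K : Set G) : A + K ⊆ A ∪ kBoundary K A := by
  intro z hz
  by_cases hA : z ∈ A
  · exact Or.inl hA
  · exact Or.inr (Or.inl ⟨subset_closure hz, hA⟩)

lemma vadd_subset_union_kB (A : Set G) (v : G) : v +ᵥ A ⊆ A ∪ kBoundary {v} A := by
  have h : v +ᵥ A ⊆ A + {v} := by
    rintro _ ⟨a, ha, rfl⟩
    exact Set.mem_add.2 ⟨a, ha, v, rfl, by simp [vadd_eq_add]; abel⟩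
  exact h.trans (add_subset_union_kB A {v})

lemma mem_kB_of_not_vadd_subset {A C : Set G} {x : G} (hx : x ∈ A) (h : ¬ (x +ᵥ C ⊆ A)) :
    x ∈ kBoundary C A := by
  rw [Set.not_subset] at h
  obtain ⟨z, hz, hzA⟩ := h
  obtain ⟨w, hw, rfl⟩ := hz
  refine Or.inr ⟨Set.mem_sub.2 ⟨x + w, by simpa [vadd_eq_add, add_comm] using hzA, w, hw, by abel⟩,
    subset_closure hx⟩

end KB

section Limsup

lemma limsup_add_le' (u v : ℕ → ℝ≥0∞) :
    limsup (fun n => u n + v n) atTop ≤ limsup u atTop + limsup v atTop := by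
  by_cases hu : limsup u atTop = ⊤
  · rw [hu, top_add]; exact le_top
  by_cases hv : limsup v atTop = ⊤
  · rw [hv, add_top]; exact le_top
  refine ENNReal.le_of_forall_pos_le_add fun ε hε _ => ?_
  have hε2 : ((ε : ℝ≥0∞) / 2) ≠ 0 := by
    simp only [ne_eq, ENNReal.div_eq_zero_iff]
    push_neg
    exact ⟨by exact_mod_cast hε.ne', by norm_num⟩
  have h1 : ∀ᶠ n in atTop, u n < limsup u atTop + ε / 2 :=
    eventually_lt_of_limsup_lt (ENNReal.lt_add_right hu hε2)
  have h2 : ∀ᶠ n in atTop, v n < limsup v atTop + ε / 2 :=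
    eventually_lt_of_limsup_lt (ENNReal.lt_add_right hv hε2)
  have h3 : ∀ᶠ n in atTop, u n + v n ≤ limsup u atTop + limsup v atTop + ε := by
    filter_upwards [h1, h2] with n hn1 hn2
    calc u n + v n ≤ (limsup u atTop + ε / 2) + (limsup v atTop + ε / 2) :=
          add_le_add hn1.le hn2.le
      _ = limsup u atTop + limsup v atTop + ((ε:ℝ≥0∞) / 2 + ε / 2) := by
          rw [add_add_add_comm]
      _ = limsup u atTop + limsup v atTop + ε := by rw [ENNReal.add_halves]
  exact limsup_le_of_le (by isBoundedDefault) h3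

lemma limsup_zero_of_le_tendsto {u v : ℕ → ℝ≥0∞} (h : ∀ n, u n ≤ v n)
    (hv : Tendsto v atTop (𝓝 0)) : limsup u atTop = 0 :=
  le_antisymm ((limsup_le_limsup (Eventually.of_forall h)).trans hv.limsup_eq.le) zero_le

end Limsup

section Conv

lemma besSN_one_eq (θ : Measure G) (A : ℕ → Set G) (g : G → ℂ) :
    besSN θ A 1 g
      = limsup (fun n => (∫⁻ t in A n, ENNReal.ofReal ‖g t‖ ∂θ) / θ (A n)) atTop := by
  unfold besSN lpAvg
  simp [Real.rpow_one]

lemma tsum_subtype_collapse {α : Type*} [AddCommMonoid α] [TopologicalSpace α]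
    {S : Set G} (h : G → α) {E : Set G} (hE : (S ∩ E).Finite)
    (hsupp : ∀ x ∈ S, h x ≠ 0 → x ∈ E) :
    ∑' x : ↥S, h ↑x = ∑ x ∈ hE.toFinset, h x := by
  classical
  rw [tsum_subtype]
  rw [tsum_eq_sum (s := hE.toFinset) ?_]
  · refine Finset.sum_congr rfl fun x hx => ?_
    rw [Set.Finite.mem_toFinset] at hx
    exact Set.indicator_of_mem hx.1 h
  · intro b hb
    rw [Set.Finite.mem_toFinset] at hb
    by_cases hbS : b ∈ S
    · rw [Set.indicator_of_mem hbS]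
      by_contra hne
      exact hb ⟨hbS, hsupp b hbS hne⟩
    · exact Set.indicator_of_notMem hbS h

variable (θ : Measure G) [θ.IsAddHaarMeasure]

lemma supp_image_compact {φ : G → ℂ} (hφ : IsCc φ) (s : G) :
    IsCompact ((fun y => s - y) '' tsupport φ) :=
  hφ.2.image (continuous_const.sub continuous_id)

lemma mem_supp_image {φ : G → ℂ} {s x : G} (h : φ (s - x) ≠ 0) :
    x ∈ (fun y => s - y) '' tsupport φ :=
  ⟨s - x, subset_tsupport _ h, by simp⟩

lemma convM_diracComb_apply {Λ : Set G} (hΛ : UnifDiscrete Λ) {φ : G → ℂ} (hφ : IsCc φ)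
    (s : G) : convM (diracComb Λ) φ s = ∑' x : ↥Λ, φ (s - ↑x) := by
  have hfin : (Λ ∩ ((fun y => s - y) '' tsupport φ)).Finite :=
    UD_finite_inter hΛ (supp_image_compact hφ s)
  have hsm : StronglyMeasurable (fun u => φ (s - u)) :=
    (hφ.1.comp (continuous_const.sub continuous_id)).stronglyMeasurable
  have hInt : Integrable (fun u => φ (s - u)) (diracComb Λ) := by
    refine ⟨hsm.aestronglyMeasurable, ?_⟩
    rw [HasFiniteIntegral, diracComb, lintegral_sum_measure]
    have heval : ∀ x : ↥Λ, (∫⁻ u, (‖φ (s - u)‖₊ : ℝ≥0∞) ∂Measure.dirac (x : G))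
        = (‖φ (s - (x:G))‖₊ : ℝ≥0∞) := fun x => lintegral_dirac _ _
    rw [show (∑' x : ↥Λ, ∫⁻ u, ‖φ (s - u)‖ₑ ∂Measure.dirac (x : G)) = ∑' x : ↥Λ, (‖φ (s - (x:G))‖₊ : ℝ≥0∞) from tsum_congr heval]
    rw [tsum_subtype_collapse (fun y => ((‖φ (s - y)‖₊ : ℝ≥0∞))) hfin ?_]
    · exact ENNReal.sum_lt_top.2 fun a _ => ENNReal.coe_lt_top
    · intro x _ hx
      refine mem_supp_image (φ := φ) ?_
      simpa using hx
  rw [convM, diracComb, integral_sum_measure hInt]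
  exact tsum_congr fun x => integral_dirac _ _

end Conv

section Counting

variable (θ : Measure G) [θ.IsAddHaarMeasure] {A : ℕ → Set G}

lemma kB_subset (L Aset : Set G) : kBoundary L Aset ⊆ closure (Aset + L) ∪ closure Aset := by
  apply Set.union_subset_union
  · exact Set.diff_subset
  · exact Set.inter_subset_right

lemma closure_add_compact {B L : Set G} (hB : IsCompact (closure B)) (hL : IsCompact L) :
    IsCompact (closure (B + L)) :=
  IsCompact.of_isClosed_subset (hB.add hL) isClosed_closure
    (closure_minimal (Set.add_subset_add_right subset_closure) (hB.add hL).isClosed)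

lemma kB_compact_superset (hA : IsVanHove θ A) {L : Set G} (hL : IsCompact L) (n : ℕ) :
    IsCompact (closure (A n + L) ∪ closure (A n)) :=
  (closure_add_compact (hA.relCompact n) hL).union (hA.relCompact n)

lemma finite_inter_kB (hA : IsVanHove θ A) {S : Set G} (hS : UnifDiscrete S)
    {L : Set G} (hL : IsCompact L) (n : ℕ) : (S ∩ kBoundary L (A n)).Finite :=
  (UD_finite_inter hS (kB_compact_superset θ hA hL n)).subset
    (Set.inter_subset_inter_right _ (kB_subset L (A n)))

lemma finite_inter_An (hA : IsVanHove θ A) {S : Set G} (hS : UnifDiscrete S) (n : ℕ) :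
    (S ∩ A n).Finite :=
  (UD_finite_inter hS (hA.relCompact n)).subset
    (Set.inter_subset_inter_right _ subset_closure)

lemma limsup_card_kB_zero (hA : IsVanHove θ A) {S : Set G} (hS : UnifDiscrete S)
    {L : Set G} (hL : IsCompact L) :
    limsup (fun n => ((S ∩ kBoundary L (A n)).ncard : ℝ≥0∞) / θ (A n)) atTop = 0 := by
  obtain ⟨U, hUo, hU0, hUcl, hUpos, hUfin, hcount⟩ := UD_window hS θ
  set L' := (L + closure U) ∪ (-closure U) ∪ closure U ∪ (L + -closure U) with hL'def
  have hL' : IsCompact L' := kB_L_compact hL hUcl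
  refine limsup_zero_of_le_tendsto (v := fun n => (θ U)⁻¹ * (θ (kBoundary L' (A n)) / θ (A n)))
    (fun n => ?_) ?_
  · have hfin : (S ∩ kBoundary L (A n)).Finite := finite_inter_kB θ hA hS hL n
    have h1 : ((S ∩ kBoundary L (A n)).ncard : ℝ≥0∞) ≤ θ (kBoundary L (A n) + U) / θ U :=
      (ENNReal.le_div_iff_mul_le (Or.inl hUpos.ne') (Or.inl hUfin.ne)).2
        (hcount _ hfin)
    have h2 : θ (kBoundary L (A n) + U) ≤ θ (kBoundary L' (A n)) :=
      measure_mono (kB_add_subset (A n) L U)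
    have h3 : ((S ∩ kBoundary L (A n)).ncard : ℝ≥0∞) / θ (A n)
        ≤ (θ (kBoundary L' (A n)) / θ U) / θ (A n) :=
      ENNReal.div_le_div_right (h1.trans (ENNReal.div_le_div_right h2 _)) _
    refine h3.trans (le_of_eq ?_)
    show _ = (θ U)⁻¹ * (θ (kBoundary L' (A n)) / θ (A n))
    simp only [div_eq_mul_inv]
    ring
  · have := ENNReal.Tendsto.const_mul (a := (θ U)⁻¹) (hA.boundary L' hL')
      (Or.inr (ENNReal.inv_ne_top.2 hUpos.ne'))
    simpa using this

end Counting

section Upper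

variable (θ : Measure G) [θ.IsAddHaarMeasure] {A : ℕ → Set G}

lemma lintegral_abs_cc_lt_top {φ : G → ℂ} (hφ : IsCc φ) :
    (∫⁻ y, ENNReal.ofReal ‖φ y‖ ∂θ) < ⊤ := by
  obtain ⟨M, hM⟩ := hφ.1.norm.bounded_above_of_compact_support hφ.2.norm
  have hle : ∀ y, ENNReal.ofReal ‖φ y‖
      ≤ Set.indicator (tsupport φ) (fun _ => ENNReal.ofReal M) y := by
    intro y
    by_cases hy : y ∈ tsupport φ
    · rw [Set.indicator_of_mem hy]
      exact ENNReal.ofReal_le_ofReal (by simpa using hM y)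
    · rw [Set.indicator_of_notMem hy, image_eq_zero_of_notMem_tsupport hy]
      simp
  calc (∫⁻ y, ENNReal.ofReal ‖φ y‖ ∂θ)
      ≤ ∫⁻ y, Set.indicator (tsupport φ) (fun _ => ENNReal.ofReal M) y ∂θ :=
        lintegral_mono hle
    _ = ENNReal.ofReal M * θ (tsupport φ) := by
        rw [lintegral_indicator (isClosed_tsupport φ).measurableSet, setLIntegral_const]
    _ < ⊤ := ENNReal.mul_lt_top ENNReal.ofReal_lt_top hφ.2.measure_lt_top

/-- pointwise bound of the difference by a sum over the symmetric difference -/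
lemma pointwise_diff_le {Λ : Set G} (hΛd : UnifDiscrete Λ) {φ : G → ℂ} (hφ : IsCc φ)
    (t s : G) :
    ENNReal.ofReal ‖convM (diracComb Λ) φ s - convM (diracComb Λ) φ (s - t)‖
      ≤ ∑' x : ↥((Λ \ (t +ᵥ Λ)) ∪ ((t +ᵥ Λ) \ Λ)), ENNReal.ofReal ‖φ (s - ↑x)‖ := by
  classical
  set D := (Λ \ (t +ᵥ Λ)) ∪ ((t +ᵥ Λ) \ Λ) with hD
  have hE1 : (Λ ∩ ((fun y => s - y) '' tsupport φ)).Finite :=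
    UD_finite_inter hΛd (supp_image_compact hφ s)
  have hE2 : (Λ ∩ ((fun y => (s - t) - y) '' tsupport φ)).Finite :=
    UD_finite_inter hΛd (supp_image_compact hφ (s - t))
  set F1 := hE1.toFinset with hF1
  set F2 := hE2.toFinset with hF2
  set F : Finset G := F1 ∪ F2.image (fun x => t + x) with hF
  have hf1 : convM (diracComb Λ) φ s = ∑ x ∈ F, (if x ∈ Λ then φ (s - x) else 0) := by
    rw [convM_diracComb_apply hΛd hφ,
      tsum_subtype_collapse _ hE1 (fun x _ hx => mem_supp_image hx)]
    have step1 : ∑ x ∈ F1, φ (s - x) = ∑ x ∈ F1, (if x ∈ Λ then φ (s - x) else 0) :=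
      Finset.sum_congr rfl fun x hx => by
        rw [if_pos (hE1.mem_toFinset.1 hx).1]
    rw [step1]
    refine Finset.sum_subset Finset.subset_union_left fun x _ hx1 => ?_
    by_cases hxΛ : x ∈ Λ
    · rw [if_pos hxΛ]
      by_contra hne
      exact hx1 (hE1.mem_toFinset.2 ⟨hxΛ, mem_supp_image hne⟩)
    · rw [if_neg hxΛ]
  have hf2 : convM (diracComb Λ) φ (s - t)
      = ∑ x ∈ F, (if x ∈ t +ᵥ Λ then φ (s - x) else 0) := by
    rw [convM_diracComb_apply hΛd hφ,
      tsum_subtype_collapse _ hE2 (fun x _ hx => mem_supp_image hx)]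
    have himg : ∑ y ∈ F2.image (fun x => t + x), (if y ∈ t +ᵥ Λ then φ (s - y) else 0)
        = ∑ x ∈ F2, (if (t + x) ∈ t +ᵥ Λ then φ (s - (t + x)) else 0) :=
      Finset.sum_image (fun x _ y _ h => add_left_cancel h)
    have step1 : ∑ x ∈ F2, φ (s - t - x)
        = ∑ x ∈ F2, (if (t + x) ∈ t +ᵥ Λ then φ (s - (t + x)) else 0) :=
      Finset.sum_congr rfl fun x hx => by
        rw [if_pos ⟨x, (hE2.mem_toFinset.1 hx).1, rfl⟩, sub_add_eq_sub_sub]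
    rw [step1, ← himg]
    refine Finset.sum_subset Finset.subset_union_right fun y _ hy2 => ?_
    by_cases hyΛ : y ∈ t +ᵥ Λ
    · rw [if_pos hyΛ]
      by_contra hne
      obtain ⟨x, hxΛ, rfl⟩ := hyΛ
      have hx2 : x ∈ F2 := by
        refine hE2.mem_toFinset.2 ⟨hxΛ, mem_supp_image ?_⟩
        rw [← sub_add_eq_sub_sub]
        simpa [vadd_eq_add] using hne
      exact hy2 (Finset.mem_image.2 ⟨x, hx2, by simp [vadd_eq_add]⟩)
    · rw [if_neg hyΛ]
  have hnorm : ‖convM (diracComb Λ) φ s - convM (diracComb Λ) φ (s - t)‖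
      ≤ ∑ x ∈ F, (if x ∈ D then ‖φ (s - x)‖ else 0) := by
    rw [hf1, hf2, ← Finset.sum_sub_distrib]
    refine (norm_sum_le _ _).trans (Finset.sum_le_sum fun x _ => ?_)
    by_cases h1 : x ∈ Λ <;> by_cases h2 : x ∈ t +ᵥ Λ
    · rw [if_pos h1, if_pos h2, sub_self, norm_zero]
      by_cases hxD : x ∈ D
      · rw [if_pos hxD]; positivity
      · rw [if_neg hxD]
    · rw [if_pos h1, if_neg h2, sub_zero, if_pos (show x ∈ D from Or.inl ⟨h1, h2⟩)]
    · rw [if_neg h1, if_pos h2, zero_sub, norm_neg, if_pos (show x ∈ D from Or.inr ⟨h2, h1⟩)]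
    · rw [if_neg h1, if_neg h2, sub_self, norm_zero]
      by_cases hxD : x ∈ D
      · rw [if_pos hxD]; positivity
      · rw [if_neg hxD]
  calc ENNReal.ofReal ‖convM (diracComb Λ) φ s - convM (diracComb Λ) φ (s - t)‖
      ≤ ENNReal.ofReal (∑ x ∈ F, (if x ∈ D then ‖φ (s - x)‖ else 0)) :=
        ENNReal.ofReal_le_ofReal hnorm
    _ = ∑ x ∈ F, ENNReal.ofReal (if x ∈ D then ‖φ (s - x)‖ else 0) :=
        ENNReal.ofReal_sum_of_nonneg fun x _ => by positivity
    _ = ∑ x ∈ F, D.indicator (fun x => ENNReal.ofReal ‖φ (s - x)‖) x := by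
        refine Finset.sum_congr rfl fun x _ => ?_
        by_cases hxD : x ∈ D
        · rw [if_pos hxD, Set.indicator_of_mem hxD]
        · rw [if_neg hxD, Set.indicator_of_notMem hxD]
          simp
    _ ≤ ∑' x : G, D.indicator (fun x => ENNReal.ofReal ‖φ (s - x)‖) x :=
        ENNReal.sum_le_tsum F
    _ = ∑' x : ↥D, ENNReal.ofReal ‖φ (s - ↑x)‖ := (tsum_subtype D _).symm

lemma D_finite {Λ : Set G} (hΛd : UnifDiscrete Λ) (t : G) {B C : Set G}
    (hBC : B ⊆ C) (hC : IsCompact C) :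
    (((Λ \ (t +ᵥ Λ)) ∪ ((t +ᵥ Λ) \ Λ)) ∩ B).Finite := by
  have h1 := UD_finite_inter hΛd hC
  have h2 := UD_finite_inter (UD_vadd hΛd t) hC
  refine (h1.union h2).subset fun x hx => ?_
  rcases hx.1 with h | h
  · exact Or.inl ⟨h.1, hBC hx.2⟩
  · exact Or.inr ⟨h.1, hBC hx.2⟩

lemma tsum_indicator_const {D B : Set G} (hfin : (D ∩ B).Finite) (c : ℝ≥0∞) :
    ∑' x : ↥D, Set.indicator B (fun _ => c) (x : G) = ((D ∩ B).ncard : ℝ≥0∞) * c := by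
  rw [tsum_subtype_collapse _ hfin (fun x _ hx => by
    by_contra hB
    exact hx (Set.indicator_of_notMem hB _))]
  rw [Finset.sum_congr rfl (fun x hx => Set.indicator_of_mem (hfin.mem_toFinset.1 hx).2 _),
    Finset.sum_const, nsmul_eq_mul, Set.ncard_eq_toFinset_card _ hfin]

lemma lintegral_diff_le (hA : IsVanHove θ A) {Λ : Set G} (hΛd : UnifDiscrete Λ)
    {φ : G → ℂ} (hφ : IsCc φ) (t : G) (n : ℕ) :
    (∫⁻ s in A n,
        ENNReal.ofReal ‖convM (diracComb Λ) φ s - convM (diracComb Λ) φ (s - t)‖ ∂θ)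
      ≤ ((((Λ \ (t +ᵥ Λ)) ∪ ((t +ᵥ Λ) \ Λ)) ∩ A n).ncard
          + (((Λ \ (t +ᵥ Λ)) ∪ ((t +ᵥ Λ) \ Λ)) ∩ kBoundary (-tsupport φ) (A n)).ncard
            : ℝ≥0∞)
        * (∫⁻ y, ENNReal.ofReal ‖φ y‖ ∂θ) := by
  classical
  set D := (Λ \ (t +ᵥ Λ)) ∪ ((t +ᵥ Λ) \ Λ) with hD
  set Cφ := ∫⁻ y, ENNReal.ofReal ‖φ y‖ ∂θ with hCφ
  set B := A n + (-tsupport φ) with hB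
  have hDcnt : D.Countable :=
    ((UD_countable hΛd).union (UD_countable (UD_vadd hΛd t))).mono
      (Set.union_subset_union Set.diff_subset Set.diff_subset)
  haveI : Countable ↥D := hDcnt.to_subtype
  have hfinB : (D ∩ B).Finite :=
    D_finite hΛd t (Set.add_subset_add_right (subset_closure : A n ⊆ closure (A n)))
      ((hA.relCompact n).add (IsCompact.neg hφ.2))
  have step1 : (∫⁻ s in A n,
        ENNReal.ofReal ‖convM (diracComb Λ) φ s - convM (diracComb Λ) φ (s - t)‖ ∂θ)
      ≤ ∑' x : ↥D, ∫⁻ s in A n, ENNReal.ofReal ‖φ (s - (x : G))‖ ∂θ := by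
    refine (lintegral_mono (pointwise_diff_le hΛd hφ t)).trans (le_of_eq ?_)
    refine lintegral_tsum fun x => ?_
    exact ((hφ.1.norm.comp (continuous_id.sub continuous_const)).measurable.ennreal_ofReal).aemeasurable
  have step2 : ∀ x : ↥D, (∫⁻ s in A n, ENNReal.ofReal ‖φ (s - (x : G))‖ ∂θ)
      ≤ Set.indicator B (fun _ => Cφ) (x : G) := by
    intro x
    by_cases hxB : (x : G) ∈ B
    · rw [Set.indicator_of_mem hxB]
      calc (∫⁻ s in A n, ENNReal.ofReal ‖φ (s - (x : G))‖ ∂θ)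
          ≤ ∫⁻ s, ENNReal.ofReal ‖φ (s - (x : G))‖ ∂θ :=
            lintegral_mono' Measure.restrict_le_self le_rfl
        _ = Cφ := by
            simp_rw [sub_eq_add_neg]
            exact lintegral_add_right_eq_self (fun y => ENNReal.ofReal ‖φ y‖) (-(x : G))
    · rw [Set.indicator_of_notMem hxB]
      refine le_of_eq ?_
      have : ∀ᵐ s ∂θ, s ∈ A n → ENNReal.ofReal ‖φ (s - (x : G))‖ = 0 := by
        refine ae_of_all _ fun s hs => ?_
        have hz : φ (s - (x : G)) = 0 := by
          by_contra hne
          exact hxB (Set.mem_add.2 ⟨s, hs, -(s - (x : G)),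
            by rw [Set.mem_neg, neg_neg]; exact subset_tsupport _ hne, by abel⟩)
        rw [hz]; simp
      rw [setLIntegral_congr_fun_ae (hA.isOpen n).measurableSet this, lintegral_zero]
  have step3 : (∑' x : ↥D, ∫⁻ s in A n, ENNReal.ofReal ‖φ (s - (x : G))‖ ∂θ)
      ≤ ((D ∩ B).ncard : ℝ≥0∞) * Cφ := by
    rw [← tsum_indicator_const hfinB Cφ]
    exact ENNReal.tsum_le_tsum step2
  have step4 : ((D ∩ B).ncard : ℝ≥0∞)
      ≤ ((D ∩ A n).ncard + (D ∩ kBoundary (-tsupport φ) (A n)).ncard : ℕ) := by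
    have hsub : D ∩ B ⊆ (D ∩ A n) ∪ (D ∩ kBoundary (-tsupport φ) (A n)) := by
      intro x hx
      rcases add_subset_union_kB (A n) (-tsupport φ) hx.2 with h | h
      · exact Or.inl ⟨hx.1, h⟩
      · exact Or.inr ⟨hx.1, h⟩
    have hfinU : ((D ∩ A n) ∪ (D ∩ kBoundary (-tsupport φ) (A n))).Finite :=
      (D_finite hΛd t (subset_closure : A n ⊆ closure (A n)) (hA.relCompact n)).union
        (D_finite hΛd t (kB_subset _ _) (kB_compact_superset θ hA (IsCompact.neg hφ.2) n))
    exact_mod_cast Nat.cast_le.2 ((Set.ncard_le_ncard hsub hfinU).trans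
      (Set.ncard_union_le _ _))
  calc (∫⁻ s in A n,
        ENNReal.ofReal ‖convM (diracComb Λ) φ s - convM (diracComb Λ) φ (s - t)‖ ∂θ)
      ≤ ((D ∩ B).ncard : ℝ≥0∞) * Cφ := step1.trans step3
    _ ≤ _ := by
        refine mul_le_mul_left ?_ Cφ
        exact_mod_cast step4

lemma dir_mpr (hA : IsVanHove θ A) {Λ : Set G} (hΛd : UnifDiscrete Λ)
    (H : ∀ ε : ℝ, 0 < ε →
      RelDense {t : G |
        limsup (fun n =>
          ((Nat.card ↥(((Λ \ (t +ᵥ Λ)) ∪ ((t +ᵥ Λ) \ Λ)) ∩ A n)) : ℝ≥0∞)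
            / θ (A n)) atTop < ENNReal.ofReal ε})
    {φ : G → ℂ} (hφ : IsCc φ) : MeanAP θ A (convM (diracComb Λ) φ) := by
  intro ε hε
  set Cφ := ∫⁻ y, ENNReal.ofReal ‖φ y‖ ∂θ with hCφdef
  have hCφtop : Cφ ≠ ⊤ := (lintegral_abs_cc_lt_top θ hφ).ne
  have hCt : 0 ≤ Cφ.toReal := ENNReal.toReal_nonneg
  set ε' := ε / (Cφ.toReal + 1) with hε'def
  have hε' : 0 < ε' := div_pos hε (by linarith)
  obtain ⟨K, hK, hKd⟩ := H ε' hε'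
  refine ⟨K, hK, fun g => ?_⟩
  obtain ⟨t, ht, hgt⟩ := hKd g
  refine ⟨t, ?_, hgt⟩
  simp only [Set.mem_setOf_eq, Nat.card_coe_set_eq] at ht ⊢
  rw [besSN_one_eq]
  set D := (Λ \ (t +ᵥ Λ)) ∪ ((t +ᵥ Λ) \ Λ) with hD
  set c1 : ℕ → ℝ≥0∞ := fun n => ((D ∩ A n).ncard : ℝ≥0∞) / θ (A n) with hc1
  set c2 : ℕ → ℝ≥0∞ :=
    fun n => ((D ∩ kBoundary (-tsupport φ) (A n)).ncard : ℝ≥0∞) / θ (A n) with hc2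
  have hub : ∀ n, (∫⁻ s in A n,
        ENNReal.ofReal ‖convM (diracComb Λ) φ s - convM (diracComb Λ) φ (s - t)‖ ∂θ)
          / θ (A n)
      ≤ Cφ * c1 n + Cφ * c2 n := by
    intro n
    have h1 := ENNReal.div_le_div_right (lintegral_diff_le θ hA hΛd hφ t n) (θ (A n))
    refine h1.trans (le_of_eq ?_)
    rw [hc1, hc2]
    rw [add_mul, ENNReal.add_div]
    congr 1 <;> rw [mul_comm, mul_div_assoc]
  have hc2zero : limsup c2 atTop = 0 := by
    have hsplit : ∀ n, c2 n ≤
        ((Λ ∩ kBoundary (-tsupport φ) (A n)).ncard : ℝ≥0∞) / θ (A n)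
          + (((t +ᵥ Λ) ∩ kBoundary (-tsupport φ) (A n)).ncard : ℝ≥0∞) / θ (A n) := by
      intro n
      rw [← ENNReal.add_div]
      refine ENNReal.div_le_div_right ?_ _
      have hsub : D ∩ kBoundary (-tsupport φ) (A n)
          ⊆ (Λ ∩ kBoundary (-tsupport φ) (A n)) ∪
            ((t +ᵥ Λ) ∩ kBoundary (-tsupport φ) (A n)) := by
        intro x hx
        rcases hx.1 with h | h
        · exact Or.inl ⟨h.1, hx.2⟩
        · exact Or.inr ⟨h.1, hx.2⟩
      have hfinU := (finite_inter_kB θ hA hΛd (IsCompact.neg hφ.2) n).union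
        (finite_inter_kB θ hA (UD_vadd hΛd t) (IsCompact.neg hφ.2) n)
      exact_mod_cast Nat.cast_le.2 ((Set.ncard_le_ncard hsub hfinU).trans
        (Set.ncard_union_le _ _))
    refine le_antisymm ?_ zero_le
    calc limsup c2 atTop
        ≤ limsup (fun n => ((Λ ∩ kBoundary (-tsupport φ) (A n)).ncard : ℝ≥0∞) / θ (A n)
            + (((t +ᵥ Λ) ∩ kBoundary (-tsupport φ) (A n)).ncard : ℝ≥0∞) / θ (A n)) atTop :=
          limsup_le_limsup (Eventually.of_forall hsplit)
      _ ≤ _ + _ := limsup_add_le' _ _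
      _ ≤ 0 := by
          rw [limsup_card_kB_zero θ hA hΛd (IsCompact.neg hφ.2),
            limsup_card_kB_zero θ hA (UD_vadd hΛd t) (IsCompact.neg hφ.2), add_zero]
  have hlim : limsup (fun n => (∫⁻ s in A n,
        ENNReal.ofReal ‖convM (diracComb Λ) φ s - convM (diracComb Λ) φ (s - t)‖ ∂θ)
          / θ (A n)) atTop ≤ Cφ * limsup c1 atTop := by
    calc limsup (fun n => (∫⁻ s in A n,
          ENNReal.ofReal ‖convM (diracComb Λ) φ s - convM (diracComb Λ) φ (s - t)‖ ∂θ)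
            / θ (A n)) atTop
        ≤ limsup (fun n => Cφ * c1 n + Cφ * c2 n) atTop :=
          limsup_le_limsup (Eventually.of_forall hub)
      _ ≤ limsup (fun n => Cφ * c1 n) atTop + limsup (fun n => Cφ * c2 n) atTop :=
          limsup_add_le' _ _
      _ = Cφ * limsup c1 atTop + Cφ * limsup c2 atTop := by
          rw [ENNReal.limsup_const_mul_of_ne_top hCφtop,
            ENNReal.limsup_const_mul_of_ne_top hCφtop]
      _ = Cφ * limsup c1 atTop := by rw [hc2zero, mul_zero, add_zero]
  have hfinal : Cφ * ENNReal.ofReal ε' < ENNReal.ofReal ε := by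
    calc Cφ * ENNReal.ofReal ε'
        ≤ ENNReal.ofReal Cφ.toReal * ENNReal.ofReal ε' :=
          mul_le_mul_left (le_of_eq (ENNReal.ofReal_toReal hCφtop).symm) _
      _ = ENNReal.ofReal (Cφ.toReal * ε') := (ENNReal.ofReal_mul hCt).symm
      _ < ENNReal.ofReal ε := by
          refine (ENNReal.ofReal_lt_ofReal_iff hε).2 ?_
          have h1 : Cφ.toReal / (Cφ.toReal + 1) < 1 :=
            (div_lt_one (by linarith)).2 (by linarith)
          calc Cφ.toReal * ε' = ε * (Cφ.toReal / (Cφ.toReal + 1)) := by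
                rw [hε'def]; ring
            _ < ε * 1 := by exact mul_lt_mul_of_pos_left h1 hε
            _ = ε := mul_one ε
  refine lt_of_le_of_lt (hlim.trans (mul_le_mul_right ?_ Cφ)) hfinal
  exact ht.le

end Upper

section LowerInfra

lemma isCompact_sub' {s t : Set G} (hs : IsCompact s) (ht : IsCompact t) :
    IsCompact (s - t) := by
  rw [← Set.image2_sub, ← Set.image_prod]
  exact (hs.prod ht).image continuous_sub

lemma meyer_key {Λ : Set G} (hne : Λ.Nonempty) (hMeyer : UnifDiscrete (Λ - Λ - Λ)) :
    ∃ W : Set G, IsOpen W ∧ (0 : G) ∈ W ∧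
      ∀ a ∈ Λ, ∀ b ∈ Λ, ∀ c ∈ Λ, ∀ d ∈ Λ, a + b - c - d ∈ W → a + b - c - d = 0 := by
  obtain ⟨U₀, hU₀o, hU₀0, hdisj⟩ := hMeyer
  obtain ⟨m, hm⟩ := hne
  refine ⟨U₀ - U₀, ?_, Set.mem_sub.2 ⟨0, hU₀0, 0, hU₀0, by abel⟩, ?_⟩
  · -- U₀ - U₀ is open
    have : U₀ - U₀ = ⋃ y ∈ U₀, (fun x => x - y) '' U₀ := by
      ext z
      simp only [Set.mem_sub, Set.mem_iUnion, Set.mem_image]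
      constructor
      · rintro ⟨a, ha, b, hb, rfl⟩; exact ⟨b, hb, a, ha, rfl⟩
      · rintro ⟨b, hb, a, ha, rfl⟩; exact ⟨a, ha, b, hb, rfl⟩
    rw [this]
    refine isOpen_biUnion fun y _ => ?_
    have : (fun x => x - y) '' U₀ = (fun x => x + y) ⁻¹' U₀ := by
      ext z
      simp only [Set.mem_image, Set.mem_preimage]
      constructor
      · rintro ⟨a, ha, rfl⟩; simpa [sub_add_cancel] using ha
      · intro h; exact ⟨z + y, h, by abel⟩
    rw [this]
    exact hU₀o.preimage (continuous_add_right y)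
  · intro a ha b hb c hc d hd hmem
    by_contra hne0
    have hp : a - c - d ∈ Λ - Λ - Λ :=
      Set.mem_sub.2 ⟨a - c, Set.mem_sub.2 ⟨a, ha, c, hc, rfl⟩, d, hd, rfl⟩
    have hq : -b ∈ Λ - Λ - Λ :=
      Set.mem_sub.2 ⟨m - m, Set.mem_sub.2 ⟨m, hm, m, hm, rfl⟩, b, hb, by abel⟩
    have hpq : a - c - d ≠ -b := by
      intro h
      apply hne0
      have : a - c - d - (-b) = 0 := by rw [h]; abel
      calc a + b - c - d = a - c - d - (-b) := by abel
        _ = 0 := this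
    obtain ⟨u₁, hu₁, u₂, hu₂, hu⟩ := Set.mem_sub.1 hmem
    have hx : (a - c - d) + u₂ ∈ ((a - c - d) +ᵥ U₀) ∩ ((-b) +ᵥ U₀) := by
      constructor
      · exact ⟨u₂, hu₂, rfl⟩
      · refine ⟨u₁, hu₁, ?_⟩
        simp only [vadd_eq_add]
        have : u₁ - u₂ = a + b - c - d := hu
        have h2 : u₁ = a + b - c - d + u₂ := by
          rw [← this]; abel
        rw [h2]; abel
    rw [hdisj _ hp _ hq hpq] at hx
    exact hx

lemma exists_V {W : Set G} (hWo : IsOpen W) (hW0 : (0 : G) ∈ W) :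
    ∃ V : Set G, IsOpen V ∧ (0 : G) ∈ V ∧ IsCompact (closure V) ∧
      ∀ a ∈ V, ∀ b ∈ V, ∀ c ∈ V, ∀ d ∈ V, a - b + c - d ∈ W := by
  have hW𝓝 : W ∈ 𝓝 (0 : G) := hWo.mem_nhds hW0
  obtain ⟨V₁, hV₁, hV₁W⟩ := exists_nhds_zero_half hW𝓝
  obtain ⟨V₂, hV₂, hV₂V₁⟩ := exists_nhds_zero_half hV₁
  set V₃ := V₂ ∩ (-V₂) with hV₃
  have hV₃𝓝 : V₃ ∈ 𝓝 (0 : G) := Filter.inter_mem hV₂ (neg_mem_nhds_zero G hV₂)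
  obtain ⟨N₀, hN₀c, hN₀𝓝⟩ := exists_compact_mem_nhds (0 : G)
  set V := interior V₃ ∩ interior N₀ with hV
  have hVo : IsOpen V := isOpen_interior.inter isOpen_interior
  have h0V : (0 : G) ∈ V :=
    ⟨mem_interior_iff_mem_nhds.2 hV₃𝓝, mem_interior_iff_mem_nhds.2 hN₀𝓝⟩
  have hVcl : IsCompact (closure V) :=
    IsCompact.of_isClosed_subset hN₀c isClosed_closure
      (closure_minimal (fun x hx => interior_subset hx.2) hN₀c.isClosed)
  refine ⟨V, hVo, h0V, hVcl, fun a ha b hb c hc d hd => ?_⟩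
  have hmem : ∀ x ∈ V, x ∈ V₂ ∧ -x ∈ V₂ := by
    intro x hx
    have hx3 : x ∈ V₃ := interior_subset hx.1
    exact ⟨hx3.1, hx3.2⟩
  have h1 : a + -b ∈ V₁ := hV₂V₁ a (hmem a ha).1 (-b) (hmem b hb).2
  have h2 : c + -d ∈ V₁ := hV₂V₁ c (hmem c hc).1 (-d) (hmem d hd).2
  have h3 : (a + -b) + (c + -d) ∈ W := hV₁W _ h1 _ h2
  have : a - b + c - d = (a + -b) + (c + -d) := by abel
  rw [this]
  exact h3

lemma exists_bump {V : Set G} (hVo : IsOpen V) (h0V : (0 : G) ∈ V)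
    (hVcl : IsCompact (closure V)) :
    ∃ (ψ : G → ℝ) (V' : Set G), Continuous ψ ∧ HasCompactSupport ψ ∧
      (∀ z, ψ z ≠ 0 → z ∈ V) ∧ IsOpen V' ∧ (0 : G) ∈ V' ∧ V' ⊆ V ∧
      (∀ z ∈ V', ψ z = 1) ∧ (∀ z, 0 ≤ ψ z ∧ ψ z ≤ 1) := by
  obtain ⟨N, hN𝓝, hNV, hNc⟩ := LocallyCompactSpace.local_compact_nhds (0 : G) V
    (hVo.mem_nhds h0V)
  obtain ⟨f, hfsupp, hf1, hf01⟩ :=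
    exists_tsupport_one_of_isOpen_isClosed hVo hVcl hNc.isClosed hNV
  refine ⟨f, interior N, f.continuous, ?_, ?_, isOpen_interior,
    mem_interior_iff_mem_nhds.2 hN𝓝, fun x hx => hNV (interior_subset hx),
    fun z hz => hf1 (interior_subset hz), fun z => ⟨(hf01 z).1, (hf01 z).2⟩⟩
  · exact IsCompact.of_isClosed_subset hVcl (isClosed_tsupport _)
      (hfsupp.trans subset_closure)
  · intro z hz
    exact hfsupp (subset_tsupport _ hz)

lemma two_point {Λ W : Set G} (hne : Λ.Nonempty)
    (hW : ∀ a ∈ Λ, ∀ b ∈ Λ, ∀ c ∈ Λ, ∀ d ∈ Λ, a + b - c - d ∈ W → a + b - c - d = 0)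
    {x y : G} (hx : x ∈ Λ) (hy : y ∈ Λ) (h : x - y ∈ W) : x = y := by
  obtain ⟨m, hm⟩ := hne
  have h1 : x + m - y - m ∈ W := by
    have : x + m - y - m = x - y := by abel
    rw [this]; exact h
  have h2 := hW x hx m hm y hy m hm h1
  have : x - y = 0 := by
    calc x - y = x + m - y - m := by abel
      _ = 0 := h2
  exact sub_eq_zero.1 this

lemma ncard_vadd_set (v : G) (X : Set G) : (v +ᵥ X).ncard = X.ncard := by
  rw [← Set.image_vadd]
  exact Set.ncard_image_of_injective X (add_right_injective v)

end LowerInfra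

section LowerCount

variable (θ : Measure G) [θ.IsAddHaarMeasure] {A : ℕ → Set G}

lemma card_le_int (hA : IsVanHove θ A) {V' : Set G} (hV'o : IsOpen V') (n : ℕ)
    {S : Set G} (hfinA : (S ∩ A n).Finite)
    (hfinB : (S ∩ kBoundary (closure V') (A n)).Finite)
    (hdisj : ∀ x₁ ∈ S, ∀ x₂ ∈ S, x₁ ≠ x₂ → (x₁ +ᵥ V') ∩ (x₂ +ᵥ V') = ∅)
    {g : G → ℝ≥0∞} (hg : ∀ x ∈ S, ∀ s ∈ x +ᵥ V', g s = 1) :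
    ((S ∩ A n).ncard : ℝ≥0∞) * θ V'
      ≤ (∫⁻ s in A n, g s ∂θ)
        + ((S ∩ kBoundary (closure V') (A n)).ncard : ℝ≥0∞) * θ V' := by
  classical
  set F' := {x ∈ S ∩ A n | x +ᵥ closure V' ⊆ A n} with hF'
  have hF'fin : F'.Finite := hfinA.subset (Set.sep_subset _ _)
  have hsplit : S ∩ A n ⊆ F' ∪ (S ∩ kBoundary (closure V') (A n)) := by
    intro x hx
    by_cases hxc : x +ᵥ closure V' ⊆ A n
    · exact Or.inl ⟨hx, hxc⟩
    · exact Or.inr ⟨hx.1, mem_kB_of_not_vadd_subset hx.2 hxc⟩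
  have hcard : (S ∩ A n).ncard ≤ F'.ncard + (S ∩ kBoundary (closure V') (A n)).ncard :=
    (Set.ncard_le_ncard hsplit (hF'fin.union hfinB)).trans (Set.ncard_union_le _ _)
  have hmain : (F'.ncard : ℝ≥0∞) * θ V' ≤ ∫⁻ s in A n, g s ∂θ := by
    set U : Set G := ⋃ x ∈ hF'fin.toFinset, x +ᵥ V' with hU
    have hUmeas : MeasurableSet U :=
      (isOpen_biUnion fun x _ => hV'o.vadd x).measurableSet
    have hdisjF : (↑hF'fin.toFinset : Set G).PairwiseDisjoint (fun x => x +ᵥ V') := by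
      intro x hx y hy hxy
      rw [Set.Finite.coe_toFinset] at hx hy
      rw [Function.onFun, Set.disjoint_iff_inter_eq_empty]
      exact hdisj x hx.1.1 y hy.1.1 hxy
    have hUA : U ⊆ A n := by
      intro z hz
      obtain ⟨x, hxF, hx⟩ := Set.mem_iUnion₂.1 hz
      rw [Set.Finite.mem_toFinset] at hxF
      exact hxF.2 (Set.vadd_set_mono subset_closure hx)
    have hcount : θ U = (F'.ncard : ℝ≥0∞) * θ V' := by
      rw [hU, measure_biUnion_finset hdisjF (fun b _ => (hV'o.vadd b).measurableSet)]
      rw [Finset.sum_congr rfl (fun b _ => measure_vadd θ b V'), Finset.sum_const,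
        nsmul_eq_mul, Set.ncard_eq_toFinset_card _ hF'fin]
    have hle : ∀ s, Set.indicator U (fun _ => (1 : ℝ≥0∞)) s ≤ g s := by
      intro s
      by_cases hsU : s ∈ U
      · rw [Set.indicator_of_mem hsU]
        obtain ⟨x, hxF, hx⟩ := Set.mem_iUnion₂.1 hsU
        rw [Set.Finite.mem_toFinset] at hxF
        exact (hg x hxF.1.1 s hx).ge
      · rw [Set.indicator_of_notMem hsU]; exact zero_le
    calc (F'.ncard : ℝ≥0∞) * θ V' = θ U := hcount.symm
      _ = θ (U ∩ A n) := by rw [Set.inter_eq_self_of_subset_left hUA]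
      _ = ∫⁻ s in A n, Set.indicator U (fun _ => (1 : ℝ≥0∞)) s ∂θ := by
          rw [lintegral_indicator hUmeas, setLIntegral_one, Measure.restrict_apply hUmeas]
      _ ≤ ∫⁻ s in A n, g s ∂θ := lintegral_mono hle
  calc ((S ∩ A n).ncard : ℝ≥0∞) * θ V'
      ≤ ((F'.ncard : ℝ≥0∞) + ((S ∩ kBoundary (closure V') (A n)).ncard : ℝ≥0∞)) * θ V' := by
        refine mul_le_mul_left ?_ _
        exact_mod_cast hcard
    _ = (F'.ncard : ℝ≥0∞) * θ V'
        + ((S ∩ kBoundary (closure V') (A n)).ncard : ℝ≥0∞) * θ V' := by rw [add_mul]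
    _ ≤ _ := add_le_add_left hmain _

end LowerCount

section LowerPointwise

variable {Λ W V V' : Set G} {φ : G → ℂ} {t t'' : G}
variable (hΛd : UnifDiscrete Λ) (hΛne : Λ.Nonempty) (hφcc : IsCc φ)
variable (hW : ∀ a ∈ Λ, ∀ b ∈ Λ, ∀ c ∈ Λ, ∀ d ∈ Λ, a + b - c - d ∈ W → a + b - c - d = 0)
variable (hVkey : ∀ a ∈ V, ∀ b ∈ V, ∀ c ∈ V, ∀ d ∈ V, a - b + c - d ∈ W)
variable (h0V : (0 : G) ∈ V)
variable (hφsupp : ∀ z, φ z ≠ 0 → z ∈ V)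
variable (hφ1 : ∀ z ∈ V', φ z = 1)
variable (hV'V : V' ⊆ V)
variable (hcase : (∃ a ∈ Λ, ∃ b ∈ Λ, t'' = a - b ∧ t - t'' ∈ V - V) ∨
    (t'' = t ∧ ¬ ∃ a ∈ Λ, ∃ b ∈ Λ, ∃ w ∈ V - V, t = a - b + w))

include hVkey h0V in
lemma hVW2 : ∀ u ∈ V, ∀ w ∈ V, u - w ∈ W := by
  intro u hu w hw
  have h := hVkey u hu w hw 0 h0V 0 h0V
  simpa using h

include hΛne hW hVkey h0V hV'V in
lemma bumps_disjoint : ∀ x₁ ∈ Λ, ∀ x₂ ∈ Λ, x₁ ≠ x₂ → (x₁ +ᵥ V') ∩ (x₂ +ᵥ V') = ∅ := by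
  intro x₁ h₁ x₂ h₂ hne
  rw [Set.eq_empty_iff_forall_notMem]
  rintro s ⟨hs₁, hs₂⟩
  obtain ⟨w₁, hw₁, rfl⟩ := hs₁
  obtain ⟨w₂, hw₂, hw⟩ := hs₂
  apply hne
  refine two_point hΛne hW h₁ h₂ ?_
  have heq : x₁ - x₂ = w₂ - w₁ := by
    have : x₂ + w₂ = x₁ + w₁ := hw
    have h4 : (x₁ - x₂) - (w₂ - w₁) = (x₁ + w₁) - (x₂ + w₂) := by abel
    rw [← this] at h4
    have h5 : (x₁ - x₂) - (w₂ - w₁) = 0 := by rw [h4]; abel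
    have := sub_eq_zero.1 h5
    exact this
  rw [heq]
  exact hVW2 hVkey h0V w₂ (hV'V hw₂) w₁ (hV'V hw₁)

include hΛd hΛne hφcc hW hVkey h0V hφsupp hφ1 hV'V hcase in
lemma P1 {x s : G} (hxΛ : x ∈ Λ) (hx : x ∉ t'' +ᵥ Λ) (hs : s ∈ x +ᵥ V') :
    convM (diracComb Λ) φ s = 1 ∧ convM (diracComb Λ) φ (s - t) = 0 := by
  obtain ⟨w', hw', rfl⟩ := hs
  simp only [vadd_eq_add]
  constructor
  · rw [convM_diracComb_apply hΛd hφcc]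
    rw [tsum_eq_single (⟨x, hxΛ⟩ : ↥Λ) ?_]
    · have heq : x + w' - x = w' := by abel
      rw [heq]
      exact hφ1 w' hw'
    · rintro ⟨y, hyΛ⟩ hne
      by_contra hφne
      have hsy : (x + w') - y ∈ V := hφsupp _ hφne
      have hxy : x - y ∈ W := by
        have h := hVkey _ hsy _ (hV'V hw') 0 h0V 0 h0V
        have heq : (x + w') - y - w' + 0 - 0 = x - y := by abel
        rwa [heq] at h
      exact hne (Subtype.ext (two_point hΛne hW hxΛ hyΛ hxy).symm)
  · rw [convM_diracComb_apply hΛd hφcc]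
    have hzero : ∀ y : ↥Λ, φ ((x + w' - t) - (y : G)) = 0 := by
      rintro ⟨y, hyΛ⟩
      by_contra hφne
      set r := (x + w' - t) - y with hr
      have hrV : r ∈ V := hφsupp _ hφne
      have htrep : t = x - y + (w' - r) := by rw [hr]; abel
      rcases hcase with ⟨a, ha, b, hb, ht''ab, hv⟩ | ⟨ht''t, hnorep⟩
      · obtain ⟨v₁, hv₁, v₂, hv₂, hveq⟩ := Set.mem_sub.1 hv
        have hkey : x + b - y - a ∈ W := by
          have h := hVkey r hrV w' (hV'V hw') v₁ hv₁ v₂ hv₂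
          have h1 : v₁ = t - t'' + v₂ := by rw [← hveq]; abel
          have heq : r - w' + v₁ - v₂ = x + b - y - a := by
            rw [h1, ht''ab, htrep]; abel
          rwa [heq] at h
        have h0 := hW x hxΛ b hb y hyΛ a ha hkey
        apply hx
        refine ⟨y, hyΛ, ?_⟩
        simp only [vadd_eq_add]
        rw [ht''ab]
        rw [← sub_eq_zero]
        calc a - b + y - x = -(x + b - y - a) := by abel
          _ = 0 := by rw [h0]; abel
      · exact hnorep ⟨x, hxΛ, y, hyΛ, w' - r,
          Set.mem_sub.2 ⟨w', hV'V hw', r, hrV, rfl⟩, htrep⟩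
    calc ∑' (y : ↥Λ), φ (x + w' - t - (y : G))
        = ∑' (_ : ↥Λ), (0 : ℂ) := tsum_congr hzero
      _ = 0 := tsum_zero

include hΛd hΛne hφcc hW hVkey h0V hφsupp hφ1 hV'V hcase in
lemma P2 {y s : G} (hyΛ : y ∈ Λ) (hy : t'' + y ∉ Λ) (hs : s ∈ (t + y) +ᵥ V') :
    convM (diracComb Λ) φ s = 0 ∧ convM (diracComb Λ) φ (s - t) = 1 := by
  obtain ⟨w', hw', rfl⟩ := hs
  simp only [vadd_eq_add]
  constructor
  · rw [convM_diracComb_apply hΛd hφcc]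
    have hzero : ∀ x : ↥Λ, φ ((t + y + w') - (x : G)) = 0 := by
      rintro ⟨x, hxΛ⟩
      by_contra hφne
      set r := (t + y + w') - x with hr
      have hrV : r ∈ V := hφsupp _ hφne
      have htrep : t = x - y + (r - w') := by rw [hr]; abel
      rcases hcase with ⟨a, ha, b, hb, ht''ab, hv⟩ | ⟨ht''t, hnorep⟩
      · obtain ⟨v₁, hv₁, v₂, hv₂, hveq⟩ := Set.mem_sub.1 hv
        have hkey : a + y - b - x ∈ W := by
          have h := hVkey r hrV w' (hV'V hw') v₂ hv₂ v₁ hv₁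
          have h1 : v₁ = t - t'' + v₂ := by rw [← hveq]; abel
          have heq : r - w' + v₂ - v₁ = a + y - b - x := by
            rw [h1, ht''ab, htrep]; abel
          rwa [heq] at h
        have h0 := hW a ha y hyΛ b hb x hxΛ hkey
        apply hy
        have hxy : t'' + y = x := by
          rw [ht''ab, ← sub_eq_zero]
          calc a - b + y - x = a + y - b - x := by abel
            _ = 0 := h0
        rw [hxy]
        exact hxΛ
      · exact hnorep ⟨x, hxΛ, y, hyΛ, r - w',
          Set.mem_sub.2 ⟨r, hrV, w', hV'V hw', rfl⟩, htrep⟩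
    calc ∑' (x : ↥Λ), φ (t + y + w' - (x : G))
        = ∑' (_ : ↥Λ), (0 : ℂ) := tsum_congr hzero
      _ = 0 := tsum_zero
  · rw [convM_diracComb_apply hΛd hφcc]
    rw [tsum_eq_single (⟨y, hyΛ⟩ : ↥Λ) ?_]
    · have heq : t + y + w' - t - y = w' := by abel
      rw [heq]
      exact hφ1 w' hw'
    · rintro ⟨y', hy'Λ⟩ hne
      by_contra hφne
      have hsy : (t + y + w' - t) - y' ∈ V := hφsupp _ hφne
      have hyy : y - y' ∈ W := by
        have h := hVkey _ hsy _ (hV'V hw') 0 h0V 0 h0V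
        have heq : (t + y + w' - t) - y' - w' + 0 - 0 = y - y' := by abel
        rwa [heq] at h
      exact hne (Subtype.ext (two_point hΛne hW hyΛ hy'Λ hyy).symm)

end LowerPointwise

section LowerDensity

variable (θ : Measure G) [θ.IsAddHaarMeasure] {A : ℕ → Set G}

lemma density_bound (hA : IsVanHove θ A) {S V' : Set G} (hS : UnifDiscrete S)
    (hV'o : IsOpen V') (hV'cl : IsCompact (closure V'))
    (hη0 : 0 < θ V') (hηtop : θ V' ≠ ⊤)
    (hdisj : ∀ x₁ ∈ S, ∀ x₂ ∈ S, x₁ ≠ x₂ → (x₁ +ᵥ V') ∩ (x₂ +ᵥ V') = ∅)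
    {g : G → ℝ≥0∞} (hg : ∀ x ∈ S, ∀ s ∈ x +ᵥ V', g s = 1) :
    limsup (fun n => ((S ∩ A n).ncard : ℝ≥0∞) / θ (A n)) atTop
      ≤ (θ V')⁻¹ * limsup (fun n => (∫⁻ s in A n, g s ∂θ) / θ (A n)) atTop := by
  have hper : ∀ n, ((S ∩ A n).ncard : ℝ≥0∞) / θ (A n)
      ≤ (θ V')⁻¹ * ((∫⁻ s in A n, g s ∂θ) / θ (A n))
        + ((S ∩ kBoundary (closure V') (A n)).ncard : ℝ≥0∞) / θ (A n) := by
    intro n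
    have h1 := card_le_int θ hA hV'o n (finite_inter_An θ hA hS n)
      (finite_inter_kB θ hA hS hV'cl n) hdisj hg
    have h2 : ((S ∩ A n).ncard : ℝ≥0∞)
        ≤ (∫⁻ s in A n, g s ∂θ) / θ V'
          + ((S ∩ kBoundary (closure V') (A n)).ncard : ℝ≥0∞) := by
      have h3 : ((S ∩ A n).ncard : ℝ≥0∞)
          ≤ ((∫⁻ s in A n, g s ∂θ)
            + ((S ∩ kBoundary (closure V') (A n)).ncard : ℝ≥0∞) * θ V') / θ V' :=
        (ENNReal.le_div_iff_mul_le (Or.inl hη0.ne') (Or.inl hηtop)).2 h1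
      refine h3.trans (le_of_eq ?_)
      rw [ENNReal.add_div, mul_div_assoc, ENNReal.div_self hη0.ne' hηtop, mul_one]
    refine (ENNReal.div_le_div_right h2 (θ (A n))).trans (le_of_eq ?_)
    rw [ENNReal.add_div]
    congr 1
    rw [div_eq_mul_inv, div_eq_mul_inv, div_eq_mul_inv]
    ring
  calc limsup (fun n => ((S ∩ A n).ncard : ℝ≥0∞) / θ (A n)) atTop
      ≤ limsup (fun n => (θ V')⁻¹ * ((∫⁻ s in A n, g s ∂θ) / θ (A n))
          + ((S ∩ kBoundary (closure V') (A n)).ncard : ℝ≥0∞) / θ (A n)) atTop :=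
        limsup_le_limsup (Eventually.of_forall hper)
    _ ≤ limsup (fun n => (θ V')⁻¹ * ((∫⁻ s in A n, g s ∂θ) / θ (A n))) atTop
        + limsup (fun n =>
            ((S ∩ kBoundary (closure V') (A n)).ncard : ℝ≥0∞) / θ (A n)) atTop :=
        limsup_add_le' _ _
    _ = (θ V')⁻¹ * limsup (fun n => (∫⁻ s in A n, g s ∂θ) / θ (A n)) atTop := by
        rw [ENNReal.limsup_const_mul_of_ne_top (ENNReal.inv_ne_top.2 hη0.ne'),
          limsup_card_kB_zero θ hA hS hV'cl, add_zero]

end LowerDensity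

section LowerMain

variable (θ : Measure G) [θ.IsAddHaarMeasure] {A : ℕ → Set G}
variable {Λ W V V' : Set G} {φ : G → ℂ} {t t'' : G} {ε : ℝ}

lemma main_est (hA : IsVanHove θ A)
    (hΛd : UnifDiscrete Λ) (hΛne : Λ.Nonempty) (hφcc : IsCc φ)
    (hW : ∀ a ∈ Λ, ∀ b ∈ Λ, ∀ c ∈ Λ, ∀ d ∈ Λ, a + b - c - d ∈ W → a + b - c - d = 0)
    (hVkey : ∀ a ∈ V, ∀ b ∈ V, ∀ c ∈ V, ∀ d ∈ V, a - b + c - d ∈ W)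
    (h0V : (0 : G) ∈ V)
    (hφsupp : ∀ z, φ z ≠ 0 → z ∈ V)
    (hφ1 : ∀ z ∈ V', φ z = 1)
    (hV'V : V' ⊆ V)
    (hcase : (∃ a ∈ Λ, ∃ b ∈ Λ, t'' = a - b ∧ t - t'' ∈ V - V) ∨
      (t'' = t ∧ ¬ ∃ a ∈ Λ, ∃ b ∈ Λ, ∃ w ∈ V - V, t = a - b + w))
    (hV'o : IsOpen V') (hV'cl : IsCompact (closure V'))
    (hη0 : 0 < θ V') (hηtop : θ V' ≠ ⊤) (hε : 0 < ε)
    (hlim : limsup (fun n => (∫⁻ s in A n,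
        ENNReal.ofReal ‖convM (diracComb Λ) φ s - convM (diracComb Λ) φ (s - t)‖ ∂θ)
          / θ (A n)) atTop < ENNReal.ofReal (ε * (θ V').toReal / 4)) :
    limsup (fun n =>
        ((Nat.card ↥(((Λ \ (t'' +ᵥ Λ)) ∪ ((t'' +ᵥ Λ) \ Λ)) ∩ A n)) : ℝ≥0∞)
          / θ (A n)) atTop < ENNReal.ofReal ε := by
  classical
  set g : G → ℝ≥0∞ := fun s =>
    ENNReal.ofReal ‖convM (diracComb Λ) φ s - convM (diracComb Λ) φ (s - t)‖ with hgdef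
  set u : ℕ → ℝ≥0∞ := fun n => (∫⁻ s in A n, g s ∂θ) / θ (A n) with hudef
  set η := θ V' with hηdef
  set S₁ := Λ \ (t'' +ᵥ Λ) with hS₁
  set S₂ := (t'' +ᵥ Λ) \ Λ with hS₂
  set v := t - t'' with hv
  set Z := v +ᵥ S₂ with hZ
  -- side 1
  have hg1 : ∀ x ∈ S₁, ∀ s ∈ x +ᵥ V', g s = 1 := by
    intro x hx s hs
    obtain ⟨h1, h2⟩ := P1 hΛd hΛne hφcc hW hVkey h0V hφsupp hφ1 hV'V hcase hx.1 hx.2 hs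
    rw [hgdef]
    simp only [h1, h2, sub_zero]
    simp
  have hdisj1 : ∀ x₁ ∈ S₁, ∀ x₂ ∈ S₁, x₁ ≠ x₂ → (x₁ +ᵥ V') ∩ (x₂ +ᵥ V') = ∅ :=
    fun x₁ h₁ x₂ h₂ hne =>
      bumps_disjoint hΛne hW hVkey h0V hV'V x₁ h₁.1 x₂ h₂.1 hne
  have hside1 : limsup (fun n => ((S₁ ∩ A n).ncard : ℝ≥0∞) / θ (A n)) atTop
      ≤ η⁻¹ * limsup u atTop :=
    density_bound θ hA (UD_mono Set.diff_subset hΛd) hV'o hV'cl hη0 hηtop hdisj1 hg1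
  -- side 2
  have hZchar : ∀ z ∈ Z, ∃ y ∈ Λ, t'' + y ∉ Λ ∧ z = t + y := by
    rintro z ⟨w, hwS₂, rfl⟩
    obtain ⟨hw1, hw2⟩ := hwS₂
    obtain ⟨y, hyΛ, rfl⟩ := hw1
    refine ⟨y, hyΛ, by simpa [vadd_eq_add] using hw2, ?_⟩
    simp only [vadd_eq_add, hv]
    abel
  have hZud : UnifDiscrete Z := by
    refine UD_mono ?_ (UD_vadd hΛd t)
    intro z hz
    obtain ⟨y, hyΛ, -, rfl⟩ := hZchar z hz
    exact ⟨y, hyΛ, rfl⟩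
  have hdisj2 : ∀ z₁ ∈ Z, ∀ z₂ ∈ Z, z₁ ≠ z₂ → (z₁ +ᵥ V') ∩ (z₂ +ᵥ V') = ∅ := by
    intro z₁ h₁ z₂ h₂ hne
    obtain ⟨y₁, hy₁Λ, -, rfl⟩ := hZchar z₁ h₁
    obtain ⟨y₂, hy₂Λ, -, rfl⟩ := hZchar z₂ h₂
    have hyne : y₁ ≠ y₂ := fun h => hne (by rw [h])
    have hbase := bumps_disjoint hΛne hW hVkey h0V hV'V y₁ hy₁Λ y₂ hy₂Λ hyne
    rw [Set.eq_empty_iff_forall_notMem]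
    rintro s ⟨hs₁, hs₂⟩
    have hmem : s - t ∈ (y₁ +ᵥ V') ∩ (y₂ +ᵥ V') := by
      obtain ⟨w₁, hw₁, rfl⟩ := hs₁
      obtain ⟨w₂, hw₂, hw⟩ := hs₂
      constructor
      · exact ⟨w₁, hw₁, by simp only [vadd_eq_add]; abel⟩
      · refine ⟨w₂, hw₂, ?_⟩
        simp only [vadd_eq_add] at hw ⊢
        rw [← hw]
        abel
    rw [hbase] at hmem
    exact hmem
  have hg2 : ∀ z ∈ Z, ∀ s ∈ z +ᵥ V', g s = 1 := by
    intro z hz s hs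
    obtain ⟨y, hyΛ, hyn, rfl⟩ := hZchar z hz
    obtain ⟨h1, h2⟩ := P2 hΛd hΛne hφcc hW hVkey h0V hφsupp hφ1 hV'V hcase hyΛ hyn hs
    rw [hgdef]
    simp only [h1, h2, zero_sub]
    simp
  have hside2' : limsup (fun n => ((Z ∩ A n).ncard : ℝ≥0∞) / θ (A n)) atTop
      ≤ η⁻¹ * limsup u atTop :=
    density_bound θ hA hZud hV'o hV'cl hη0 hηtop hdisj2 hg2
  have hcard2 : ∀ n, ((S₂ ∩ A n).ncard : ℝ≥0∞)
      ≤ ((Z ∩ A n).ncard : ℝ≥0∞) + ((Z ∩ kBoundary {v} (A n)).ncard : ℝ≥0∞) := by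
    intro n
    have he1 : (S₂ ∩ A n).ncard = (Z ∩ (v +ᵥ A n)).ncard := by
      rw [← ncard_vadd_set v (S₂ ∩ A n), Set.vadd_set_inter]
    have hsub : Z ∩ (v +ᵥ A n) ⊆ (Z ∩ A n) ∪ (Z ∩ kBoundary {v} (A n)) := by
      intro x hx
      rcases vadd_subset_union_kB (A n) v hx.2 with h | h
      · exact Or.inl ⟨hx.1, h⟩
      · exact Or.inr ⟨hx.1, h⟩
    have hfinU : ((Z ∩ A n) ∪ (Z ∩ kBoundary {v} (A n))).Finite :=
      (finite_inter_An θ hA hZud n).union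
        (finite_inter_kB θ hA hZud isCompact_singleton n)
    rw [he1]
    exact_mod_cast Nat.cast_le.2 ((Set.ncard_le_ncard hsub hfinU).trans
      (Set.ncard_union_le _ _))
  have hside2 : limsup (fun n => ((S₂ ∩ A n).ncard : ℝ≥0∞) / θ (A n)) atTop
      ≤ η⁻¹ * limsup u atTop := by
    calc limsup (fun n => ((S₂ ∩ A n).ncard : ℝ≥0∞) / θ (A n)) atTop
        ≤ limsup (fun n => ((Z ∩ A n).ncard : ℝ≥0∞) / θ (A n)
            + ((Z ∩ kBoundary {v} (A n)).ncard : ℝ≥0∞) / θ (A n)) atTop := by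
          refine limsup_le_limsup (Eventually.of_forall fun n => ?_)
          beta_reduce
          rw [← ENNReal.add_div]
          exact ENNReal.div_le_div_right (hcard2 n) _
      _ ≤ limsup (fun n => ((Z ∩ A n).ncard : ℝ≥0∞) / θ (A n)) atTop
          + limsup (fun n => ((Z ∩ kBoundary {v} (A n)).ncard : ℝ≥0∞) / θ (A n)) atTop :=
          limsup_add_le' _ _
      _ ≤ η⁻¹ * limsup u atTop + 0 := by
          refine add_le_add hside2' (le_of_eq ?_)
          exact limsup_card_kB_zero θ hA hZud isCompact_singleton
      _ = η⁻¹ * limsup u atTop := add_zero _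
  -- combine
  have hquarter : η⁻¹ * limsup u atTop ≤ ENNReal.ofReal (ε / 4) := by
    have h1 : η⁻¹ * limsup u atTop ≤ η⁻¹ * ENNReal.ofReal (ε * η.toReal / 4) :=
      mul_le_mul_right hlim.le _
    refine h1.trans (le_of_eq ?_)
    have h2 : ENNReal.ofReal (ε * η.toReal / 4) = ENNReal.ofReal (ε / 4) * η := by
      rw [show ε * η.toReal / 4 = (ε / 4) * η.toReal by ring,
        ENNReal.ofReal_mul (by positivity), ENNReal.ofReal_toReal hηtop]
    rw [h2, mul_comm (ENNReal.ofReal (ε / 4)) η, ← mul_assoc,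
      ENNReal.inv_mul_cancel hη0.ne' hηtop, one_mul]
  calc limsup (fun n =>
        ((Nat.card ↥(((Λ \ (t'' +ᵥ Λ)) ∪ ((t'' +ᵥ Λ) \ Λ)) ∩ A n)) : ℝ≥0∞)
          / θ (A n)) atTop
      ≤ limsup (fun n => ((S₁ ∩ A n).ncard : ℝ≥0∞) / θ (A n)
          + ((S₂ ∩ A n).ncard : ℝ≥0∞) / θ (A n)) atTop := by
        refine limsup_le_limsup (Eventually.of_forall fun n => ?_)
        beta_reduce
        rw [Nat.card_coe_set_eq, ← ENNReal.add_div]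
        refine ENNReal.div_le_div_right ?_ _
        have : ((S₁ ∪ S₂) ∩ A n) = (S₁ ∩ A n) ∪ (S₂ ∩ A n) := Set.union_inter_distrib_right _ _ _
        rw [this]
        exact_mod_cast Nat.cast_le.2 (Set.ncard_union_le _ _)
    _ ≤ limsup (fun n => ((S₁ ∩ A n).ncard : ℝ≥0∞) / θ (A n)) atTop
        + limsup (fun n => ((S₂ ∩ A n).ncard : ℝ≥0∞) / θ (A n)) atTop :=
        limsup_add_le' _ _
    _ ≤ ENNReal.ofReal (ε / 4) + ENNReal.ofReal (ε / 4) :=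
        add_le_add (hside1.trans hquarter) (hside2.trans hquarter)
    _ = ENNReal.ofReal (ε / 2) := by
        rw [← ENNReal.ofReal_add (by positivity) (by positivity)]
        congr 1
        ring
    _ < ENNReal.ofReal ε := (ENNReal.ofReal_lt_ofReal_iff hε).2 (by linarith)

lemma dir_mp (hA : IsVanHove θ A) {Λ : Set G} (hΛ : IsDelone Λ)
    (hMeyer : UnifDiscrete (Λ - Λ - Λ))
    (H : ∀ φ : G → ℂ, IsCc φ → MeanAP θ A (convM (diracComb Λ) φ)) :
    ∀ ε : ℝ, 0 < ε →
      RelDense {t : G |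
        limsup (fun n =>
          ((Nat.card ↥(((Λ \ (t +ᵥ Λ)) ∪ ((t +ᵥ Λ) \ Λ)) ∩ A n)) : ℝ≥0∞)
            / θ (A n)) atTop < ENNReal.ofReal ε} := by
  intro ε hε
  have hΛd := hΛ.1
  have hΛne : Λ.Nonempty := by
    obtain ⟨K, hK, h⟩ := hΛ.2
    obtain ⟨x, hx, -⟩ := h 0
    exact ⟨x, hx⟩
  obtain ⟨W, hWo, hW0, hWkey⟩ := meyer_key hΛne hMeyer
  obtain ⟨V, hVo, h0V, hVcl, hVkey⟩ := exists_V hWo hW0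
  obtain ⟨ψ, V', hψc, hψcs, hψV, hV'o, h0V', hV'V, hψ1, hψ01⟩ := exists_bump hVo h0V hVcl
  set φ : G → ℂ := fun x => (ψ x : ℂ) with hφdef
  have hφcc : IsCc φ :=
    ⟨Complex.continuous_ofReal.comp hψc, hψcs.comp_left Complex.ofReal_zero⟩
  have hφsupp : ∀ z, φ z ≠ 0 → z ∈ V := fun z hz =>
    hψV z (by simpa [hφdef] using hz)
  have hφ1 : ∀ z ∈ V', φ z = 1 := fun z hz => by
    simp [hφdef, hψ1 z hz]
  have hV'cl : IsCompact (closure V') :=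
    IsCompact.of_isClosed_subset hVcl isClosed_closure (closure_mono hV'V)
  have hη0 : 0 < θ V' := hV'o.measure_pos θ ⟨0, h0V'⟩
  have hηtop : θ V' ≠ ⊤ :=
    ((measure_mono (hV'V.trans subset_closure)).trans_lt hVcl.measure_lt_top).ne
  set δ := ε * (θ V').toReal / 4 with hδdef
  have hδ : 0 < δ := by
    have h1 : 0 < (θ V').toReal := ENNReal.toReal_pos hη0.ne' hηtop
    rw [hδdef]; positivity
  obtain ⟨K, hK, hKd⟩ := H φ hφcc δ hδ
  refine ⟨K + (closure V - closure V), hK.add (isCompact_sub' hVcl hVcl), fun g => ?_⟩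
  obtain ⟨t, ht, hgt⟩ := hKd g
  rw [Set.mem_setOf_eq, besSN_one_eq] at ht
  by_cases hrep : ∃ a ∈ Λ, ∃ b ∈ Λ, ∃ w ∈ V - V, t = a - b + w
  · obtain ⟨a, ha, b, hb, w, hw, htw⟩ := hrep
    refine ⟨a - b, ?_, ?_⟩
    · exact main_est θ hA hΛd hΛne hφcc hWkey hVkey h0V hφsupp hφ1 hV'V
        (Or.inl ⟨a, ha, b, hb, rfl, by rw [htw]; simpa using hw⟩)
        hV'o hV'cl hη0 hηtop hε ht
    · have heq : g - (a - b) = (g - t) + w := by rw [htw]; abel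
      rw [heq]
      exact Set.mem_add.2 ⟨g - t, hgt, w,
        Set.sub_subset_sub subset_closure subset_closure hw, rfl⟩
  · refine ⟨t, ?_, ?_⟩
    · exact main_est θ hA hΛd hΛne hφcc hWkey hVkey h0V hφsupp hφ1 hV'V
        (Or.inr ⟨rfl, hrep⟩) hV'o hV'cl hη0 hηtop hε ht
    · have heq : g - t = (g - t) + 0 := by abel
      rw [heq]
      exact Set.mem_add.2 ⟨g - t, hgt, 0,
        Set.mem_sub.2 ⟨0, subset_closure h0V, 0, subset_closure h0V, by abel⟩, rfl⟩

end LowerMain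

end MAPAux

theorem statement7
    {G : Type*} [AddCommGroup G] [TopologicalSpace G] [IsTopologicalAddGroup G]
    [LocallyCompactSpace G] [SigmaCompactSpace G] [T2Space G]
    [MeasurableSpace G] [BorelSpace G]
    (θ : Measure G) [θ.IsAddHaarMeasure]
    (A : ℕ → Set G) (hA : IsVanHove θ A)
    (Λ : Set G) (hΛ : IsDelone Λ) (hMeyer : UnifDiscrete (Λ - Λ - Λ)) :
    (∀ φ : G → ℂ, IsCc φ → MeanAP θ A (convM (diracComb Λ) φ)) ↔
      ∀ ε : ℝ, 0 < ε →
        RelDense {t : G |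
          limsup (fun n =>
            ((Nat.card ↥(((Λ \ (t +ᵥ Λ)) ∪ ((t +ᵥ Λ) \ Λ)) ∩ A n)) : ℝ≥0∞)
              / θ (A n)) atTop < ENNReal.ofReal ε} := by
  constructor
  · intro H
    exact MAPAux.dir_mp θ hA hΛ hMeyer H
  · intro H φ hφ
    exact MAPAux.dir_mpr θ hA hΛ.1 H hφ
end
end

section
/- For each 1 ≤ p < ∞ and each van Hove sequence 𝒜, one has Bap^p_𝒜(G) ∩ L^∞(G) = Bap^1_𝒜(G) ∩ L^∞(G); that is, a bounded measurable function is Besicovitch p-almost periodic with respect to 𝒜 if and only if it is Besicovitch 1-almost periodic with respect to 𝒜. -/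
open MeasureTheory Filter Topology
open scoped ENNReal Pointwise

noncomputable section

section Aux

open MAP ENNReal

namespace MAP
section TPAux

variable {G : Type*} [MeasurableSpace G] [TopologicalSpace G] [AddCommGroup G]

def charOne : Char G := ⟨1, fun _ => by simp, fun _ _ => by simp⟩

def charMul (χ ψ : Char G) : Char G :=
  ⟨χ.1 * ψ.1, fun x => by simp [χ.2.1 x, ψ.2.1 x],
   fun x y => by simp [χ.2.2 x y, ψ.2.2 x y]; ring⟩

def charConj (χ : Char G) : Char G :=
  ⟨⟨fun x => (starRingEnd ℂ) (χ.1 x), (Complex.continuous_conj).comp χ.1.continuous⟩,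
   fun x => by simp [χ.2.1 x], fun x y => by simp [χ.2.2 x y]⟩

lemma tp_of_fintype {ι : Type} [Fintype ι] (c : ι → ℂ) (χ : ι → Char G) :
    IsTrigPoly (fun x => ∑ i, c i * ((χ i : C(G, ℂ)) x)) := by
  classical
  let e := (Fintype.equivFin ι).symm
  refine ⟨Fintype.card ι, c ∘ e, χ ∘ e, ?_⟩
  funext x
  exact Fintype.sum_equiv e.symm (fun i => c i * ((χ i : C(G, ℂ)) x))
    (fun j => (c ∘ e) j * (((χ ∘ e) j : C(G, ℂ)) x)) (fun i => by simp [e])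

lemma tp_const (a : ℂ) : IsTrigPoly (fun _ : G => a) :=
  ⟨1, fun _ => a, fun _ => charOne, by funext x; simp [charOne]⟩

lemma tp_add {P Q : G → ℂ} (hP : IsTrigPoly P) (hQ : IsTrigPoly Q) :
    IsTrigPoly (fun x => P x + Q x) := by
  obtain ⟨n, c, χ, rfl⟩ := hP
  obtain ⟨m, d, ψ, rfl⟩ := hQ
  refine ⟨n + m, Fin.append c d, Fin.append χ ψ, ?_⟩
  funext x
  rw [Fin.sum_univ_add]
  simp

lemma tp_mul {P Q : G → ℂ} (hP : IsTrigPoly P) (hQ : IsTrigPoly Q) :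
    IsTrigPoly (fun x => P x * Q x) := by
  classical
  obtain ⟨n, c, χ, rfl⟩ := hP
  obtain ⟨m, d, ψ, rfl⟩ := hQ
  have := tp_of_fintype (G := G) (ι := Fin n × Fin m)
    (fun ij => c ij.1 * d ij.2) (fun ij => charMul (χ ij.1) (ψ ij.2))
  convert this using 1
  funext x
  rw [Finset.sum_mul_sum, ← Finset.sum_product', Finset.univ_product_univ]
  refine Finset.sum_congr rfl fun ij _ => ?_
  simp [charMul]
  ring

lemma tp_conj {P : G → ℂ} (hP : IsTrigPoly P) :
    IsTrigPoly (fun x => (starRingEnd ℂ) (P x)) := by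
  obtain ⟨n, c, χ, rfl⟩ := hP
  refine ⟨n, fun i => (starRingEnd ℂ) (c i), fun i => charConj (χ i), ?_⟩
  funext x
  simp [charConj]

lemma tp_pow {P : G → ℂ} (hP : IsTrigPoly P) (k : ℕ) :
    IsTrigPoly (fun x => P x ^ k) := by
  induction k with
  | zero => simpa using tp_const (G := G) 1
  | succ k ih => simpa [pow_succ] using tp_mul ih hP

lemma tp_sum {ι : Type*} (s : Finset ι) (F : ι → G → ℂ)
    (h : ∀ i ∈ s, IsTrigPoly (F i)) :
    IsTrigPoly (fun x => ∑ i ∈ s, F i x) := by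
  classical
  induction s using Finset.induction_on with
  | empty => simpa using tp_const (G := G) 0
  | insert _ _ hnot ih =>
      rename_i a s
      simp only [Finset.sum_insert hnot]
      exact tp_add (h a (Finset.mem_insert_self a s))
        (ih fun i hi => h i (Finset.mem_insert_of_mem hi))

end TPAux
end MAP

-- δ-trick
lemma real_delta {x δ pp : ℝ} (hx : 0 ≤ x) (hδ : 0 < δ) (hpp : 1 ≤ pp) :
    x ≤ δ + δ ^ (1 - pp) * x ^ pp := by
  rcases le_or_gt x δ with h | h
  · have : 0 ≤ δ ^ (1 - pp) * x ^ pp :=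
      mul_nonneg (Real.rpow_nonneg hδ.le _) (Real.rpow_nonneg hx _)
    linarith
  · have hx0 : 0 < x := hδ.trans h
    have h1 : δ ^ (pp - 1) * x ≤ x ^ pp := by
      have : δ ^ (pp - 1) ≤ x ^ (pp - 1) :=
        Real.rpow_le_rpow hδ.le h.le (by linarith)
      calc δ ^ (pp - 1) * x ≤ x ^ (pp - 1) * x := by nlinarith
        _ = x ^ (pp - 1) * x ^ (1 : ℝ) := by rw [Real.rpow_one]
        _ = x ^ pp := by rw [← Real.rpow_add hx0]; norm_num
    have h2 : x = δ ^ (1 - pp) * (δ ^ (pp - 1) * x) := by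
      rw [← mul_assoc, ← Real.rpow_add hδ]
      norm_num
    calc x = δ ^ (1 - pp) * (δ ^ (pp - 1) * x) := h2
      _ ≤ δ ^ (1 - pp) * x ^ pp :=
          mul_le_mul_of_nonneg_left h1 (Real.rpow_nonneg hδ.le _)
      _ ≤ δ + δ ^ (1 - pp) * x ^ pp := le_add_of_nonneg_left hδ.le

-- (a+b)^p ≤ 2^p (a^p + b^p)
lemma real_addpow {a b pp : ℝ} (ha : 0 ≤ a) (hb : 0 ≤ b) (hpp : 0 ≤ pp) :
    (a + b) ^ pp ≤ 2 ^ pp * (a ^ pp + b ^ pp) := by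
  have hm : 0 ≤ max a b := le_max_of_le_left ha
  have h1 : (a + b) ^ pp ≤ (2 * max a b) ^ pp := by
    apply Real.rpow_le_rpow (by linarith) _ hpp
    rcases max_cases a b with ⟨he, h'⟩ | ⟨he, h'⟩ <;> rw [he] <;> linarith
  have h2 : (2 * max a b) ^ pp = 2 ^ pp * (max a b) ^ pp :=
    Real.mul_rpow (by norm_num) hm
  have h3 : (max a b) ^ pp ≤ a ^ pp + b ^ pp := by
    rcases max_cases a b with ⟨he, _⟩ | ⟨he, _⟩ <;> rw [he]
    · exact le_add_of_nonneg_right (Real.rpow_nonneg hb _)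
    · exact le_add_of_nonneg_left (Real.rpow_nonneg ha _)
  calc (a + b) ^ pp ≤ (2 * max a b) ^ pp := h1
    _ = 2 ^ pp * (max a b) ^ pp := h2
    _ ≤ 2 ^ pp * (a ^ pp + b ^ pp) := by
        apply mul_le_mul_of_nonneg_left h3 (Real.rpow_nonneg (by norm_num) _)

-- a^p ≤ B^(p-1) a for 0 ≤ a ≤ B
lemma real_pow_le {a B pp : ℝ} (ha : 0 ≤ a) (hB : a ≤ B) (hpp : 1 ≤ pp) :
    a ^ pp ≤ B ^ (pp - 1) * a := by
  have h1 : a ^ pp = a ^ (pp - 1) * a := by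
    rcases eq_or_lt_of_le ha with h | h
    · rw [← h, Real.zero_rpow (by positivity : pp ≠ 0), mul_zero]
    · calc a ^ pp = a ^ ((pp - 1) + 1) := by norm_num
        _ = a ^ (pp - 1) * a ^ (1 : ℝ) := Real.rpow_add h _ _
        _ = a ^ (pp - 1) * a := by rw [Real.rpow_one]
  rw [h1]
  exact mul_le_mul_of_nonneg_right
    (Real.rpow_le_rpow ha hB (by linarith)) ha

-- truncation
lemma trunc_norm_le {C : ℝ} (hC : 0 < C) (b : ℂ) :
    ‖((C / max C ‖b‖ : ℝ) : ℂ) * b‖ ≤ C := by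
  rw [norm_mul, Complex.norm_real, Real.norm_eq_abs,
    abs_of_pos (div_pos hC (lt_max_of_lt_left hC))]
  rw [div_mul_eq_mul_div, div_le_iff₀ (lt_max_of_lt_left hC)]
  exact mul_le_mul_of_nonneg_left (le_max_right _ _) hC.le

lemma trunc_close {C : ℝ} (hC : 0 < C) (a b : ℂ) (ha : ‖a‖ ≤ C) :
    ‖a - ((C / max C ‖b‖ : ℝ) : ℂ) * b‖ ≤ ‖a - b‖ := by
  rcases le_or_gt ‖b‖ C with h | h
  · rw [max_eq_left h, div_self hC.ne']
    simp
  · rw [max_eq_right h.le]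
    have hb0 : 0 < ‖b‖ := hC.trans h
    set t : ℝ := C / ‖b‖ with ht
    have ht1 : t ≤ 1 := (div_le_one hb0).2 h.le
    have ht0 : 0 < t := div_pos hC hb0
    apply le_of_pow_le_pow_left₀ two_ne_zero (norm_nonneg _)
    have e1 : ∀ z w : ℂ, ‖z - w‖ ^ 2 =
        Complex.normSq z - 2 * (z * (starRingEnd ℂ) w).re + Complex.normSq w := by
      intro z w
      rw [Complex.sq_norm]
      simp [Complex.normSq_apply, Complex.mul_re, Complex.sub_re, Complex.sub_im,
        Complex.conj_re, Complex.conj_im]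
      ring
    rw [show a - (t : ℂ) * b = a - ((t:ℂ) * b) from rfl, e1, e1]
    have e2 : (a * (starRingEnd ℂ) ((t:ℂ) * b)).re = t * (a * (starRingEnd ℂ) b).re := by
      rw [map_mul]
      have : a * ((starRingEnd ℂ) (t:ℂ) * (starRingEnd ℂ) b)
          = (t:ℂ) * (a * (starRingEnd ℂ) b) := by
        rw [Complex.conj_ofReal]; ring
      rw [this, Complex.re_ofReal_mul]
    have e3 : Complex.normSq ((t:ℂ) * b) = t ^ 2 * Complex.normSq b := by
      rw [map_mul, Complex.normSq_ofReal]; ring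
    rw [e2, e3]
    have hre : (a * (starRingEnd ℂ) b).re ≤ C * ‖b‖ := by
      calc (a * (starRingEnd ℂ) b).re ≤ ‖a * (starRingEnd ℂ) b‖ :=
            Complex.re_le_norm _
        _ = ‖a‖ * ‖b‖ := by
            rw [norm_mul]
            simp
        _ ≤ C * ‖b‖ := by nlinarith
    have hnb : Complex.normSq b = ‖b‖ ^ 2 := by
      rw [Complex.normSq_eq_norm_sq]
    rw [hnb]
    have htb : t * ‖b‖ = C := div_mul_cancel₀ _ hb0.ne'
    nlinarith [sq_nonneg (1 - t), hre]

-- averaging lemma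
lemma avg_le {G : Type*} [MeasurableSpace G] (θ : MeasureTheory.Measure G) (A : Set G)
    (a c : ℝ≥0∞) (hc : c ≠ ⊤) (F H : G → ℝ≥0∞) (hpt : ∀ t, F t ≤ a + c * H t) :
    (∫⁻ t in A, F t ∂θ) / θ A ≤ a + c * ((∫⁻ t in A, H t ∂θ) / θ A) := by
  calc (∫⁻ t in A, F t ∂θ) / θ A
      ≤ (∫⁻ t in A, a + c * H t ∂θ) / θ A :=
        ENNReal.div_le_div_right (lintegral_mono hpt) _
    _ = (a * θ A + c * ∫⁻ t in A, H t ∂θ) / θ A := by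
        rw [lintegral_add_left measurable_const, setLIntegral_const,
          lintegral_const_mul' c _ hc]
    _ = (a * θ A) / θ A + (c * ∫⁻ t in A, H t ∂θ) / θ A := ENNReal.add_div
    _ ≤ a + c * ((∫⁻ t in A, H t ∂θ) / θ A) := by
        refine add_le_add ?_ (le_of_eq (mul_div_assoc _ _ _))
        rw [mul_div_assoc]
        calc a * (θ A / θ A) ≤ a * 1 := mul_le_mul_right ENNReal.div_self_le_one a
          _ = a := mul_one a

lemma limsup_avg_lt {u v : ℕ → ℝ≥0∞} (a c M : ℝ≥0∞)
    (hpt : ∀ n, u n ≤ a + c * v n) (hv : limsup v atTop < M) :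
    limsup u atTop ≤ a + c * M := by
  refine limsup_le_of_le (by isBoundedDefault) ?_
  filter_upwards [eventually_lt_of_limsup_lt hv] with n hn
  exact (hpt n).trans (add_le_add_right (mul_le_mul_right hn.le c) a)

end Aux

open MAP

theorem statement8
    {G : Type*} [AddCommGroup G] [TopologicalSpace G] [IsTopologicalAddGroup G]
    [LocallyCompactSpace G] [SigmaCompactSpace G] [T2Space G]
    [MeasurableSpace G] [BorelSpace G]
    (θ : Measure G) [θ.IsAddHaarMeasure]
    (p : ℝ) (hp : 1 ≤ p) (A : ℕ → Set G) (hA : IsVanHove θ A)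
    (f : G → ℂ) (hmeas : Measurable f) (hbd : ∃ C : ℝ, ∀ x, ‖f x‖ ≤ C) :
    BapMem θ A p f ↔ BapMem θ A 1 f := by
  classical
  obtain ⟨C0, hC0⟩ := hbd
  set C' : ℝ := max C0 1 with hC'def
  have hC' : 0 < C' := lt_of_lt_of_le one_pos (le_max_right _ _)
  have hfC : ∀ x, ‖f x‖ ≤ C' := fun x => (hC0 x).trans (le_max_left _ _)
  have hp0 : (0:ℝ) < p := lt_of_lt_of_le one_pos hp
  have hmem : ∀ q : ℝ, 0 ≤ q → MemLpLoc θ q f := by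
    intro q hq
    refine ⟨hmeas.aestronglyMeasurable, fun K hK => ?_⟩
    calc (∫⁻ t in K, ENNReal.ofReal (‖f t‖ ^ q) ∂θ)
        ≤ ∫⁻ _ in K, ENNReal.ofReal (C' ^ q) ∂θ :=
          lintegral_mono fun t => ENNReal.ofReal_le_ofReal
            (Real.rpow_le_rpow (norm_nonneg _) (hfC t) hq)
      _ = ENNReal.ofReal (C' ^ q) * θ K := setLIntegral_const _ _
      _ < ⊤ := ENNReal.mul_lt_top ENNReal.ofReal_lt_top hK.measure_lt_top
  constructor
  · -- Bap p → Bap 1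
    rintro ⟨-, hap⟩
    refine ⟨hmem 1 zero_le_one, fun ε hε => ?_⟩
    set δ : ℝ := ε / 2 with hδdef
    have hδ : 0 < δ := by rw [hδdef]; linarith
    set x0 : ℝ := δ ^ (p - 1) * (ε / 4) with hx0def
    have hx0 : 0 < x0 := mul_pos (Real.rpow_pos_of_pos hδ _) (by linarith)
    set ε' : ℝ := x0 ^ (1 / p) with hε'def
    have hε' : 0 < ε' := Real.rpow_pos_of_pos hx0 _
    obtain ⟨P, hPt, hPb⟩ := hap ε' hε'
    refine ⟨P, hPt, ?_⟩
    set g : G → ℂ := fun x => f x - P x with hg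
    have hεp : ε' ^ p = x0 := by
      rw [hε'def, ← Real.rpow_mul hx0.le, one_div_mul_cancel hp0.ne', Real.rpow_one]
    have hLp : Filter.limsup (fun n => lpAvg θ (A n) p g) Filter.atTop
        < ENNReal.ofReal (ε' ^ p) := by
      have h1 : (Filter.limsup (fun n => lpAvg θ (A n) p g) Filter.atTop) ^ (1/p)
          < ENNReal.ofReal ε' := hPb
      have h2 := ENNReal.rpow_lt_rpow h1 hp0
      rwa [← ENNReal.rpow_mul, one_div_mul_cancel hp0.ne', ENNReal.rpow_one,
        ENNReal.ofReal_rpow_of_pos hε'] at h2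
    have hpt : ∀ n, lpAvg θ (A n) 1 g
        ≤ ENNReal.ofReal δ + ENNReal.ofReal (δ ^ (1 - p)) * lpAvg θ (A n) p g := by
      intro n
      simp only [lpAvg]
      refine avg_le θ (A n) _ _ ENNReal.ofReal_ne_top _ _ (fun t => ?_)
      rw [Real.rpow_one]
      calc ENNReal.ofReal ‖g t‖ ≤ ENNReal.ofReal (δ + δ ^ (1 - p) * ‖g t‖ ^ p) :=
            ENNReal.ofReal_le_ofReal (real_delta (norm_nonneg _) hδ hp)
        _ = ENNReal.ofReal δ
            + ENNReal.ofReal (δ ^ (1 - p)) * ENNReal.ofReal (‖g t‖ ^ p) := by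
            rw [ENNReal.ofReal_add hδ.le
                (mul_nonneg (Real.rpow_nonneg hδ.le _) (Real.rpow_nonneg (norm_nonneg _) _)),
              ENNReal.ofReal_mul (Real.rpow_nonneg hδ.le _)]
    have hls := limsup_avg_lt _ _ _ hpt hLp
    have hval : δ + δ ^ (1 - p) * ε' ^ p < ε := by
      have e1 : δ ^ (1 - p) * ε' ^ p = ε / 4 := by
        rw [hεp, hx0def, ← mul_assoc, ← Real.rpow_add hδ]
        norm_num
      rw [e1, hδdef]; linarith
    calc besSN θ A 1 g
        = Filter.limsup (fun n => lpAvg θ (A n) 1 g) Filter.atTop := by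
          simp [besSN]
      _ ≤ ENNReal.ofReal δ + ENNReal.ofReal (δ ^ (1 - p)) * ENNReal.ofReal (ε' ^ p) := hls
      _ = ENNReal.ofReal (δ + δ ^ (1 - p) * ε' ^ p) := by
          rw [← ENNReal.ofReal_mul (Real.rpow_nonneg hδ.le _),
            ← ENNReal.ofReal_add hδ.le
              (mul_nonneg (Real.rpow_nonneg hδ.le _) (Real.rpow_nonneg hε'.le _))]
      _ < ENNReal.ofReal ε := (ENNReal.ofReal_lt_ofReal_iff hε).2 hval
  · -- Bap 1 → Bap p
    rintro ⟨-, hap⟩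
    refine ⟨hmem p hp0.le, fun ε hε => ?_⟩
    set K : ℝ := 2 ^ p * (2 * C') ^ (p - 1) with hKdef
    have hK : 0 < K :=
      mul_pos (Real.rpow_pos_of_pos two_pos _) (Real.rpow_pos_of_pos (by linarith) _)
    set ε'' : ℝ := ε ^ p / (4 * K) with hε''def
    have hε''pos : 0 < ε'' := div_pos (Real.rpow_pos_of_pos hε _) (by linarith)
    obtain ⟨P, hPt, hPb⟩ := hap ε'' hε''pos
    obtain ⟨n, c, χ, hPeq⟩ := hPt
    have hPt : IsTrigPoly P := ⟨n, c, χ, hPeq⟩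
    set S : ℝ := max (∑ i, ‖c i‖) 1 with hSdef
    have hS0 : 0 < S := lt_of_lt_of_le one_pos (le_max_right _ _)
    have hPS : ∀ x, ‖P x‖ ≤ S := by
      intro x
      rw [hPeq]
      calc ‖∑ i, c i * ((χ i : C(G, ℂ)) x)‖ ≤ ∑ i, ‖c i * ((χ i : C(G, ℂ)) x)‖ :=
            norm_sum_le _ _
        _ = ∑ i, ‖c i‖ := by
            refine Finset.sum_congr rfl fun i _ => ?_
            rw [norm_mul, (χ i).2.1 x, mul_one]
        _ ≤ S := le_max_left _ _
    set η : ℝ := ε / 4 with hηdef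
    have hη : 0 < η := by rw [hηdef]; linarith
    have hcont : ContinuousOn (fun s : ℝ => C' / max C' (Real.sqrt s))
        (Set.Icc 0 (S ^ 2)) :=
      (continuous_const.div (continuous_const.max Real.continuous_sqrt)
        (fun s => (lt_max_of_lt_left hC').ne')).continuousOn
    obtain ⟨q, hq⟩ := exists_polynomial_near_of_continuousOn 0 (S ^ 2)
      (fun s : ℝ => C' / max C' (Real.sqrt s)) hcont (η / S) (div_pos hη hS0)
    set R : G → ℂ := fun x => (Polynomial.aeval (P x * (starRingEnd ℂ) (P x))) q * P x
      with hRdef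
    have hRtrig : IsTrigPoly R := by
      have hPP : IsTrigPoly (fun x => P x * (starRingEnd ℂ) (P x)) :=
        tp_mul hPt (tp_conj hPt)
      have h2 : IsTrigPoly (fun x =>
          (∑ i ∈ Finset.range (q.natDegree + 1),
            ((q.coeff i : ℝ) : ℂ) * (P x * (starRingEnd ℂ) (P x)) ^ i) * P x) := by
        refine tp_mul (tp_sum _ _ fun i _ => ?_) hPt
        exact tp_mul (tp_const _) (tp_pow hPP i)
      have hRe : R = fun x =>
          (∑ i ∈ Finset.range (q.natDegree + 1),
            ((q.coeff i : ℝ) : ℂ) * (P x * (starRingEnd ℂ) (P x)) ^ i) * P x := by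
        funext x
        simp only [hRdef]
        congr 1
        rw [Polynomial.aeval_eq_sum_range]
        exact Finset.sum_congr rfl fun i _ => by rw [Complex.real_smul]
      rw [hRe]
      exact h2
    have hPval : ∀ x, P x * (starRingEnd ℂ) (P x) = ((‖P x‖ ^ 2 : ℝ) : ℂ) := by
      intro x
      rw [Complex.mul_conj, Complex.normSq_eq_norm_sq]
    have hRval : ∀ x, R x = ((q.eval (‖P x‖ ^ 2) : ℝ) : ℂ) * P x := by
      intro x
      simp only [hRdef]
      congr 1
      rw [hPval x]
      have h1 : ((‖P x‖ ^ 2 : ℝ) : ℂ) = algebraMap ℝ ℂ (‖P x‖ ^ 2) := rfl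
      rw [h1, Polynomial.aeval_algebraMap_apply]
      congr 1
    set Q : G → ℂ := fun x => ((C' / max C' ‖P x‖ : ℝ) : ℂ) * P x with hQdef
    have hQclose : ∀ x, ‖f x - Q x‖ ≤ ‖f x - P x‖ := fun x => trunc_close hC' _ _ (hfC x)
    have hQbd : ∀ x, ‖f x - Q x‖ ≤ 2 * C' := by
      intro x
      calc ‖f x - Q x‖ ≤ ‖f x‖ + ‖Q x‖ := norm_sub_le _ _
        _ ≤ C' + C' := add_le_add (hfC x) (trunc_norm_le hC' _)
        _ = 2 * C' := by ring
    have hQR : ∀ x, ‖Q x - R x‖ ≤ η := by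
      intro x
      have hs : ‖P x‖ ^ 2 ∈ Set.Icc (0:ℝ) (S ^ 2) :=
        ⟨sq_nonneg _, pow_le_pow_left₀ (norm_nonneg _) (hPS x) 2⟩
      have hsq : Real.sqrt (‖P x‖ ^ 2) = ‖P x‖ := Real.sqrt_sq (norm_nonneg _)
      have herr : |C' / max C' ‖P x‖ - q.eval (‖P x‖ ^ 2)| ≤ η / S := by
        have h3 := hq _ hs
        rw [hsq] at h3
        rw [abs_sub_comm]
        exact h3.le
      calc ‖Q x - R x‖
          = ‖(((C' / max C' ‖P x‖ - q.eval (‖P x‖ ^ 2) : ℝ)) : ℂ)‖ * ‖P x‖ := by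
            rw [hQdef, hRval x]
            simp only []
            rw [← sub_mul, norm_mul, Complex.ofReal_sub]
        _ = |C' / max C' ‖P x‖ - q.eval (‖P x‖ ^ 2)| * ‖P x‖ := by
            rw [Complex.norm_real, Real.norm_eq_abs]
        _ ≤ (η / S) * S :=
            mul_le_mul herr (hPS x) (norm_nonneg _) (div_pos hη hS0).le
        _ = η := div_mul_cancel₀ _ hS0.ne'
    have hptw : ∀ x, ‖f x - R x‖ ^ p ≤ K * ‖f x - P x‖ + 2 ^ p * η ^ p := by
      intro x
      have h2p : (0:ℝ) ≤ 2 ^ p := Real.rpow_nonneg (by norm_num) _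
      have hBp : (0:ℝ) ≤ (2 * C') ^ (p - 1) := Real.rpow_nonneg (by linarith) _
      have h1 : ‖f x - R x‖ ≤ ‖f x - Q x‖ + η := by
        calc ‖f x - R x‖ = ‖(f x - Q x) + (Q x - R x)‖ := by rw [sub_add_sub_cancel]
          _ ≤ ‖f x - Q x‖ + ‖Q x - R x‖ := norm_add_le _ _
          _ ≤ ‖f x - Q x‖ + η := add_le_add_right (hQR x) _
      calc ‖f x - R x‖ ^ p ≤ (‖f x - Q x‖ + η) ^ p :=
            Real.rpow_le_rpow (norm_nonneg _) h1 hp0.le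
        _ ≤ 2 ^ p * (‖f x - Q x‖ ^ p + η ^ p) :=
            real_addpow (norm_nonneg _) hη.le hp0.le
        _ ≤ 2 ^ p * ((2 * C') ^ (p - 1) * ‖f x - Q x‖ + η ^ p) := by
            refine mul_le_mul_of_nonneg_left ?_ h2p
            have := real_pow_le (norm_nonneg (f x - Q x)) (hQbd x) hp
            linarith
        _ ≤ 2 ^ p * ((2 * C') ^ (p - 1) * ‖f x - P x‖ + η ^ p) := by
            refine mul_le_mul_of_nonneg_left ?_ h2p
            have := mul_le_mul_of_nonneg_left (hQclose x) hBp
            linarith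
        _ = K * ‖f x - P x‖ + 2 ^ p * η ^ p := by rw [hKdef]; ring
    have hL1 : Filter.limsup (fun m => lpAvg θ (A m) 1 (fun x => f x - P x)) Filter.atTop
        < ENNReal.ofReal ε'' := by
      have h1 : besSN θ A 1 (fun x => f x - P x) < ENNReal.ofReal ε'' := hPb
      simpa [besSN] using h1
    have hptn : ∀ m, lpAvg θ (A m) p (fun x => f x - R x)
        ≤ ENNReal.ofReal (2 ^ p * η ^ p)
          + ENNReal.ofReal K * lpAvg θ (A m) 1 (fun x => f x - P x) := by
      intro m
      simp only [lpAvg]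
      refine avg_le θ (A m) _ _ ENNReal.ofReal_ne_top _ _ fun t => ?_
      rw [Real.rpow_one]
      calc ENNReal.ofReal (‖f t - R t‖ ^ p)
          ≤ ENNReal.ofReal (2 ^ p * η ^ p + K * ‖f t - P t‖) := by
            apply ENNReal.ofReal_le_ofReal
            linarith [hptw t]
        _ = ENNReal.ofReal (2 ^ p * η ^ p)
            + ENNReal.ofReal K * ENNReal.ofReal ‖f t - P t‖ := by
            rw [ENNReal.ofReal_add
                (mul_nonneg (Real.rpow_nonneg (by norm_num) _) (Real.rpow_nonneg hη.le _))
                (mul_nonneg hK.le (norm_nonneg _)),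
              ENNReal.ofReal_mul hK.le]
    have hls := limsup_avg_lt _ _ _ hptn hL1
    refine ⟨R, hRtrig, ?_⟩
    set β : ℝ := 2 ^ p * η ^ p + K * ε'' with hβdef
    have hβpos : 0 < β := by
      have := mul_pos hK hε''pos
      have := mul_pos (Real.rpow_pos_of_pos (two_pos) p) (Real.rpow_pos_of_pos hη p)
      rw [hβdef]; linarith
    have hβlt : β < ε ^ p := by
      have hεppos : 0 < ε ^ p := Real.rpow_pos_of_pos hε _
      have e1 : K * ε'' = ε ^ p / 4 := by
        rw [hε''def]
        field_simp
      have e2 : 2 ^ p * η ^ p = (ε / 2) ^ p := by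
        rw [hηdef, ← Real.mul_rpow (by norm_num) (by linarith)]
        congr 1
        ring
      have e3 : (ε / 2) ^ p ≤ ε ^ p / 2 := by
        have h2p : (2:ℝ) ≤ 2 ^ p := by
          calc (2:ℝ) = 2 ^ (1:ℝ) := (Real.rpow_one 2).symm
            _ ≤ 2 ^ p := Real.rpow_le_rpow_of_exponent_le one_le_two hp
        rw [Real.div_rpow hε.le (by norm_num)]
        gcongr
      rw [hβdef, e1, e2]
      linarith
    calc besSN θ A p (fun x => f x - R x)
        = (Filter.limsup (fun m => lpAvg θ (A m) p (fun x => f x - R x))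
            Filter.atTop) ^ (1/p) := rfl
      _ ≤ (ENNReal.ofReal (2 ^ p * η ^ p)
            + ENNReal.ofReal K * ENNReal.ofReal ε'') ^ (1/p) :=
          ENNReal.rpow_le_rpow hls (by positivity)
      _ = ENNReal.ofReal β ^ (1/p) := by
          rw [hβdef, ENNReal.ofReal_add
              (mul_nonneg (Real.rpow_nonneg (by norm_num) _) (Real.rpow_nonneg hη.le _))
              (mul_nonneg hK.le hε''pos.le),
            ENNReal.ofReal_mul hK.le]
      _ = ENNReal.ofReal (β ^ (1/p)) := ENNReal.ofReal_rpow_of_pos hβpos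
      _ < ENNReal.ofReal ε := by
          refine (ENNReal.ofReal_lt_ofReal_iff hε).2 ?_
          have h4 := Real.rpow_lt_rpow hβpos.le hβlt (by positivity : (0:ℝ) < 1/p)
          rwa [← Real.rpow_mul hε.le, mul_one_div_cancel hp0.ne', Real.rpow_one] at h4
end
end
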